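/- arXiv:1010.4350 — 5 statements merged into one kernel-verified Lean document; each statement's English description precedes it below -/
import Mathlib

section
/- Let u be a 2×2 complex unitary matrix and let C_u = |0⟩⟨0| ⊗ I₂ + |1⟩⟨1| ⊗ u be the associated 4×4 controlled unitary (acting on ℂ² ⊗ ℂ², control on the first factor). Then there exist 2×2 unitary matrices A and B satisfying C_u · (X ⊗ I₂) = (A ⊗ B) · C_u if and only if Tr(u) = 0 or u is a complex scalar multiple of the 2×2 identity matrix. -/
open Matrix Kronecker

noncomputable section

/-- Pauli X matrix. -/
def PX : Matrix (Fin 2) (Fin 2) ℂ := !![0, 1; 1, 0]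

/-- Matrix unit |0⟩⟨0|. -/
def e00 : Matrix (Fin 2) (Fin 2) ℂ := !![1, 0; 0, 0]

/-- Matrix unit |1⟩⟨1|. -/
def e11 : Matrix (Fin 2) (Fin 2) ℂ := !![0, 0; 0, 1]

/-- Controlled unitary C_u = |0⟩⟨0| ⊗ I₂ + |1⟩⟨1| ⊗ u. -/
def CU (u : Matrix (Fin 2) (Fin 2) ℂ) : Matrix (Fin 2 × Fin 2) (Fin 2 × Fin 2) ℂ :=
  e00 ⊗ₖ (1 : Matrix (Fin 2) (Fin 2) ℂ) + e11 ⊗ₖ u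

/-- Cayley–Hamilton for 2×2 matrices. -/
lemma ch2 (u : Matrix (Fin 2) (Fin 2) ℂ) : u * u = u.trace • u - u.det • 1 := by
  ext i j
  fin_cases i <;> fin_cases j <;>
    simp [Matrix.mul_apply, Fin.sum_univ_two, Matrix.trace_fin_two, Matrix.det_fin_two,
      Matrix.one_apply] <;> ring

/-- The reverse construction: if `u = γ • star u` for a unimodular `γ`, then suitable
unitaries `A`, `B` exist. -/
lemma rev (u : Matrix (Fin 2) (Fin 2) ℂ) (hu : u ∈ Matrix.unitaryGroup (Fin 2) ℂ)
    (γ : ℂ) (hγ : star γ * γ = 1) (hx : u = γ • star u) :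
    ∃ A B : Matrix (Fin 2) (Fin 2) ℂ,
      A ∈ Matrix.unitaryGroup (Fin 2) ℂ ∧ B ∈ Matrix.unitaryGroup (Fin 2) ℂ ∧
      CU u * (PX ⊗ₖ (1 : Matrix (Fin 2) (Fin 2) ℂ)) = (A ⊗ₖ B) * CU u := by
  refine ⟨!![0, 1; γ, 0], star u, ?_, ?_, ?_⟩
  · rw [Matrix.mem_unitaryGroup_iff']
    ext i j
    fin_cases i <;> fin_cases j <;>
      simp [Matrix.star_eq_conjTranspose, Matrix.mul_apply, Fin.sum_univ_two,
        Matrix.conjTranspose_apply, Matrix.one_apply]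
    exact hγ
  · exact Unitary.star_mem hu
  · have hB : star u * u = 1 := hu.1
    have e1 : e00 * PX = !![0, 1; 0, 0] := by
      ext i j; fin_cases i <;> fin_cases j <;>
        simp [e00, PX, Matrix.mul_apply, Fin.sum_univ_two]
    have e2 : e11 * PX = !![0, 0; 1, 0] := by
      ext i j; fin_cases i <;> fin_cases j <;>
        simp [e11, PX, Matrix.mul_apply, Fin.sum_univ_two]
    have e3 : !![0, 1; γ, 0] * e00 = γ • !![0, 0; 1, 0] := by
      ext i j; fin_cases i <;> fin_cases j <;>
        simp [e00, Matrix.mul_apply, Fin.sum_univ_two]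
    have e4 : !![0, 1; γ, 0] * e11 = !![0, 1; 0, 0] := by
      ext i j; fin_cases i <;> fin_cases j <;>
        simp [e11, Matrix.mul_apply, Fin.sum_univ_two]
    rw [CU, add_mul, mul_add, ← Matrix.mul_kronecker_mul, ← Matrix.mul_kronecker_mul,
      ← Matrix.mul_kronecker_mul, ← Matrix.mul_kronecker_mul, e1, e2, e3, e4,
      one_mul, mul_one, mul_one, hB, Matrix.smul_kronecker, ← Matrix.kronecker_smul, ← hx]
    exact add_comm _ _

theorem stmt_0 (u : Matrix (Fin 2) (Fin 2) ℂ) (hu : u ∈ Matrix.unitaryGroup (Fin 2) ℂ) :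
    (∃ A B : Matrix (Fin 2) (Fin 2) ℂ,
        A ∈ Matrix.unitaryGroup (Fin 2) ℂ ∧ B ∈ Matrix.unitaryGroup (Fin 2) ℂ ∧
        CU u * (PX ⊗ₖ (1 : Matrix (Fin 2) (Fin 2) ℂ)) = (A ⊗ₖ B) * CU u) ↔
      (u.trace = 0 ∨ ∃ c : ℂ, u = c • (1 : Matrix (Fin 2) (Fin 2) ℂ)) := by
  constructor
  · rintro ⟨A, B, -, -, h⟩
    have key := fun (i j k l : Fin 2) => (Matrix.ext_iff.2 h) (i, j) (k, l)
    have h01 : ∀ j l : Fin 2, A 0 1 * (B * u) j l = (1 : Matrix (Fin 2) (Fin 2) ℂ) j l := by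
      intro j l
      have := key 0 j 1 l
      fin_cases j <;> fin_cases l <;>
        simpa [CU, e00, e11, PX, Matrix.mul_apply, Fintype.sum_prod_type,
          Fin.sum_univ_two, Matrix.one_apply, mul_add, mul_assoc, -mul_eq_zero]
          using this.symm
    have h10 : ∀ j l : Fin 2, A 1 0 * B j l = u j l := by
      intro j l
      have := key 1 j 0 l
      fin_cases j <;> fin_cases l <;>
        simpa [CU, e00, e11, PX, Matrix.mul_apply, Fintype.sum_prod_type,
          Fin.sum_univ_two, Matrix.one_apply] using this.symm
    have hBu : A 0 1 • (B * u) = 1 := by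
      ext j l; simpa using h01 j l
    have hA01 : A 0 1 ≠ 0 := by
      intro h0
      have := Matrix.ext_iff.2 hBu 0 0
      rw [h0] at this
      simp at this
    have huB : u = A 1 0 • B := by
      ext j l; simpa using (h10 j l).symm
    have hBu' : B * u = (A 0 1)⁻¹ • (1 : Matrix (Fin 2) (Fin 2) ℂ) := by
      rw [← hBu, inv_smul_smul₀ hA01]
    have hu2 : u * u = (A 1 0 * (A 0 1)⁻¹) • (1 : Matrix (Fin 2) (Fin 2) ℂ) := by
      nth_rewrite 1 [huB]
      rw [smul_mul_assoc, hBu', smul_smul]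
    by_cases htr : u.trace = 0
    · exact Or.inl htr
    · right
      set μ : ℂ := A 1 0 * (A 0 1)⁻¹ with hμ
      have h5 : u.trace • u = (μ + u.det) • (1 : Matrix (Fin 2) (Fin 2) ℂ) := by
        have hch := ch2 u
        rw [hu2] at hch
        rw [add_smul, hch]
        abel
      refine ⟨(μ + u.det) * (u.trace)⁻¹, ?_⟩
      rw [mul_smul, smul_comm, ← h5, inv_smul_smul₀ htr]
  · rintro (htr | ⟨c, hc⟩)
    · -- trace zero case: u = (-det u) • star u
      have hB : star u * u = 1 := hu.1
      have hB' : u * star u = 1 := hu.2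
      have hdet : star u.det * u.det = 1 := by
        have := congrArg Matrix.det hB
        simpa [Matrix.det_mul, Matrix.star_eq_conjTranspose, Matrix.det_conjTranspose]
          using this
      have hu2 : u * u = (-u.det) • 1 := by
        rw [ch2 u, htr, zero_smul, zero_sub, neg_smul]
      have hx : u = (-u.det) • star u := by
        calc u = u * 1 := (mul_one u).symm
        _ = u * (u * star u) := by rw [hB']
        _ = (u * u) * star u := by rw [mul_assoc]
        _ = ((-u.det) • 1) * star u := by rw [hu2]
        _ = (-u.det) • star u := by rw [smul_mul_assoc, one_mul]
      exact rev u hu (-u.det) (by simpa using hdet) hx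
    · -- scalar case: u = (c*c) • star u
      have hc1 : star c * c = 1 := by
        have hB : star u * u = 1 := hu.1
        have := Matrix.ext_iff.2 hB 0 0
        simpa [hc, Matrix.star_eq_conjTranspose, Matrix.mul_apply, Fin.sum_univ_two,
          Matrix.conjTranspose_apply, Matrix.one_apply] using this
      have hc2 : c * star c = 1 := by rw [mul_comm]; exact hc1
      have hx : u = (c * c) • star u := by
        rw [hc, star_smul, star_one, smul_smul]
        congr 1
        rw [mul_assoc, hc2, mul_one]
      have hγ : star (c * c) * (c * c) = 1 := by
        rw [star_mul']
        calc star c * star c * (c * c) = star c * c * (star c * c) := by ring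
        _ = 1 := by rw [hc1, one_mul]
      exact rev u hu (c * c) hγ hx

end
end

section
/- Let u be a 2×2 complex unitary matrix with Tr(u) = 0, and let C_u = |0⟩⟨0| ⊗ I₂ + |1⟩⟨1| ⊗ u. Then there exist a real number θ and a 2×2 unitary matrix w such that C_u = (I₂ ⊗ w) · ((u_θ ⊗ I₂) · C_Z) · (I₂ ⊗ w†), where u_θ = |0⟩⟨0| + e^{iθ}|1⟩⟨1| is the single-qubit phase matrix and C_Z = |0⟩⟨0| ⊗ I₂ + |1⟩⟨1| ⊗ Z is the controlled-Z matrix. -/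
open Matrix Kronecker

noncomputable section

/-- Pauli Z matrix. -/
def PZ : Matrix (Fin 2) (Fin 2) ℂ := !![1, 0; 0, -1]

/-- Single-qubit phase matrix u_θ = diag(1, e^{iθ}). -/
def phaseU (θ : ℝ) : Matrix (Fin 2) (Fin 2) ℂ :=
  !![1, 0; 0, Complex.exp (θ * Complex.I)]

lemma aux_conj (n : ℝ) (p q : ℂ) (hnne : (n:ℂ) ≠ 0)
    (hpreal : (starRingEnd ℂ) p = p)
    (hnorm : p * p + q * (starRingEnd ℂ) q = 1)
    (hnn : (n : ℂ) * n = 2 * (1 + p)) :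
    ((n : ℂ)⁻¹ • !![1 + p, -q; (starRingEnd ℂ) q, 1 + p] : Matrix (Fin 2) (Fin 2) ℂ) *
      PZ * ((n : ℂ)⁻¹ • !![1 + p, -q; (starRingEnd ℂ) q, 1 + p])ᴴ
      = !![p, q; (starRingEnd ℂ) q, -p] := by
  ext i j
  fin_cases i <;> fin_cases j
  · simp [Matrix.mul_apply, Fin.sum_univ_two, Matrix.conjTranspose_apply,
      Complex.conj_ofReal, hpreal, PZ]
    field_simp
    linear_combination (-p) * hnn - hnorm
  · simp [Matrix.mul_apply, Fin.sum_univ_two, Matrix.conjTranspose_apply,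
      Complex.conj_ofReal, hpreal, PZ]
    field_simp
    linear_combination (-q) * hnn
  · simp [Matrix.mul_apply, Fin.sum_univ_two, Matrix.conjTranspose_apply,
      Complex.conj_ofReal, hpreal, PZ]
    field_simp
    linear_combination (-(starRingEnd ℂ) q) * hnn
  · simp [Matrix.mul_apply, Fin.sum_univ_two, Matrix.conjTranspose_apply,
      Complex.conj_ofReal, hpreal, PZ]
    field_simp
    linear_combination p * hnn + hnorm

lemma aux_unit (n : ℝ) (p q : ℂ) (hnne : (n:ℂ) ≠ 0)
    (hpreal : (starRingEnd ℂ) p = p)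
    (hnorm : p * p + q * (starRingEnd ℂ) q = 1)
    (hnn : (n : ℂ) * n = 2 * (1 + p)) :
    (((n : ℂ)⁻¹ • !![1 + p, -q; (starRingEnd ℂ) q, 1 + p] : Matrix (Fin 2) (Fin 2) ℂ))ᴴ *
      ((n : ℂ)⁻¹ • !![1 + p, -q; (starRingEnd ℂ) q, 1 + p]) = 1 := by
  ext i j
  fin_cases i <;> fin_cases j <;>
    simp [Matrix.mul_apply, Fin.sum_univ_two, Matrix.conjTranspose_apply,
      Matrix.one_apply, Complex.conj_ofReal, hpreal] <;>
    field_simp <;> ring_nf <;> linear_combination hnorm - hnn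

lemma exists_conj (u : Matrix (Fin 2) (Fin 2) ℂ) (hu : u ∈ Matrix.unitaryGroup (Fin 2) ℂ)
    (htr : u.trace = 0) :
    ∃ (θ : ℝ) (w : Matrix (Fin 2) (Fin 2) ℂ), w ∈ Matrix.unitaryGroup (Fin 2) ℂ ∧
      u = Complex.exp (θ * Complex.I) • (w * PZ * wᴴ) := by
  have h1 : uᴴ * u = 1 := Matrix.mem_unitaryGroup_iff'.mp hu
  have h2 : u * uᴴ = 1 := Matrix.mem_unitaryGroup_iff.mp hu
  have hdet : u.det * (starRingEnd ℂ) u.det = 1 := by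
    have := congrArg Matrix.det h2
    rwa [Matrix.det_mul, Matrix.det_conjTranspose, Matrix.det_one] at this
  set z : ℂ := -u.det with hz
  have habsz : ‖z‖ = 1 := by
    have h3 := congrArg (‖·‖) hdet
    rw [norm_mul, Complex.norm_conj, norm_one] at h3
    have := norm_nonneg u.det
    have h4 : ‖u.det‖ = 1 := by nlinarith
    simpa [hz] using h4
  set θ : ℝ := z.arg / 2 with hθ
  set l : ℂ := Complex.exp (θ * Complex.I) with hl
  have hll : l * l = z := by
    rw [hl, ← Complex.exp_add]
    have he : (θ : ℂ) * Complex.I + θ * Complex.I = (z.arg : ℂ) * Complex.I := by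
      push_cast [hθ]; ring
    rw [he]
    have := Complex.norm_mul_exp_arg_mul_I z
    rwa [habsz, Complex.ofReal_one, one_mul] at this
  have hlne : l ≠ 0 := Complex.exp_ne_zero _
  have hconjl : (starRingEnd ℂ) l * l = 1 := by
    have : (starRingEnd ℂ) l = Complex.exp (-((θ:ℂ) * Complex.I)) := by
      rw [hl, ← Complex.exp_conj]; congr 1; simp
    rw [this, ← Complex.exp_add, neg_add_cancel, Complex.exp_zero]
  set v : Matrix (Fin 2) (Fin 2) ℂ := l⁻¹ • u with hv
  have huv : u = l • v := by rw [hv, smul_smul, mul_inv_cancel₀ hlne, one_smul]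
  have h11 : u 1 1 = -u 0 0 := by
    rw [Matrix.trace_fin_two] at htr; linear_combination htr
  have hCH : u * u = z • 1 := by
    ext i j
    fin_cases i <;> fin_cases j <;>
      simp [Matrix.mul_apply, Fin.sum_univ_two, hz, Matrix.det_fin_two,
        Matrix.smul_apply, Matrix.one_apply, h11] <;> ring
  have hv2 : v * v = 1 := by
    rw [hv, Matrix.smul_mul, Matrix.mul_smul, hCH, smul_smul, smul_smul]
    have hc : l⁻¹ * (l⁻¹ * z) = 1 := by
      rw [← hll]
      field_simp
    rw [← mul_assoc] at hc
    rw [hc, one_smul]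
  have hvv : vᴴ * v = 1 := by
    rw [hv, Matrix.conjTranspose_smul, Matrix.smul_mul, Matrix.mul_smul, h1,
      smul_smul]
    have hc : star l⁻¹ * l⁻¹ = (1 : ℂ) := by
      rw [star_inv₀, Complex.star_def, ← _root_.mul_inv_rev, mul_comm, hconjl, inv_one]
    rw [hc, one_smul]
  have hherm : vᴴ = v := by
    calc vᴴ = vᴴ * (v * v) := by rw [hv2, mul_one]
    _ = (vᴴ * v) * v := by rw [mul_assoc]
    _ = v := by rw [hvv, one_mul]
  set p : ℂ := v 0 0 with hp
  set q : ℂ := v 0 1 with hq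
  have hv10 : v 1 0 = (starRingEnd ℂ) q := by
    have := congrFun (congrFun hherm 1) 0
    simp [Matrix.conjTranspose_apply] at this
    rw [← this, hq]
  have hv11 : v 1 1 = -p := by
    have htv : v.trace = 0 := by
      rw [hv, Matrix.trace_smul, htr, smul_zero]
    rw [Matrix.trace_fin_two] at htv
    linear_combination htv
  have hpreal : (starRingEnd ℂ) p = p := by
    have := congrFun (congrFun hherm 0) 0
    simpa [Matrix.conjTranspose_apply, hp] using this
  have hnorm : p * p + q * (starRingEnd ℂ) q = 1 := by
    have := congrFun (congrFun hv2 0) 0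
    simpa [Matrix.mul_apply, Fin.sum_univ_two, Matrix.one_apply, hv10, ← hp, ← hq] using this
  clear_value p q v l θ z
  by_cases hpm : p = -1
  · -- v = diag(-1, 1), use swap matrix
    have hq0 : q = 0 := by
      have : q * (starRingEnd ℂ) q = 0 := by
        rw [hpm] at hnorm; linear_combination hnorm
      have := congrArg (‖·‖) this
      simpa [norm_mul, Complex.norm_conj, mul_self_eq_zero] using this
    refine ⟨θ, !![0, 1; 1, 0], ?_, ?_⟩
    · rw [Matrix.mem_unitaryGroup_iff]
      ext i j
      fin_cases i <;> fin_cases j <;>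
        simp [Matrix.mul_apply, Fin.sum_univ_two, Matrix.conjTranspose_apply, Matrix.one_apply]
    · rw [huv, hl]
      congr 1
      ext i j
      fin_cases i <;> fin_cases j <;>
        simp [Matrix.mul_apply, Fin.sum_univ_two, Matrix.conjTranspose_apply, PZ] <;>
        simp [← hp, ← hq, hv10, hv11, hpm, hq0]
  · -- main case: p ≠ -1
    have hpre : (p.re : ℂ) = p := Complex.conj_eq_iff_re.mp hpreal
    have hqnorm : q * (starRingEnd ℂ) q = (Complex.normSq q : ℂ) := Complex.mul_conj q
    have hre : p.re ^ 2 + Complex.normSq q = 1 := by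
      have hc : ((p.re ^ 2 + Complex.normSq q : ℝ) : ℂ) = ((1 : ℝ) : ℂ) := by
        push_cast
        rw [hpre]
        linear_combination hnorm - hqnorm
      exact_mod_cast hc
    have hple : -1 ≤ p.re := by nlinarith [Complex.normSq_nonneg q, sq_nonneg (p.re + 1)]
    have hpne : p.re ≠ -1 := by
      intro h
      apply hpm
      rw [← hpre, h]
      norm_num
    have hppos : 0 < 1 + p.re := by
      rcases lt_or_eq_of_le hple with h | h
      · linarith
      · exact absurd h.symm hpne
    set n : ℝ := Real.sqrt (2 * (1 + p.re)) with hn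
    have hnpos : 0 < n := Real.sqrt_pos.mpr (by linarith)
    have hnn : (n : ℂ) * n = 2 * (1 + p) := by
      have hm : (n : ℝ) * n = 2 * (1 + p.re) := Real.mul_self_sqrt (by linarith)
      calc (n : ℂ) * n = ((n * n : ℝ) : ℂ) := by push_cast; ring
      _ = ((2 * (1 + p.re) : ℝ) : ℂ) := by rw [hm]
      _ = 2 * (1 + p) := by push_cast; rw [hpre]
    have hnne : (n : ℂ) ≠ 0 := by
      simpa using hnpos.ne'
    have hvmat : v = !![p, q; (starRingEnd ℂ) q, -p] := by
      ext i j
      fin_cases i <;> fin_cases j <;>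
        simp [← hp, ← hq, hv10, hv11]
    refine ⟨θ, (n : ℂ)⁻¹ • !![1 + p, -q; (starRingEnd ℂ) q, 1 + p], ?_, ?_⟩
    · rw [Matrix.mem_unitaryGroup_iff']
      exact aux_unit n p q hnne hpreal hnorm hnn
    · rw [huv, hl, hvmat, aux_conj n p q hnne hpreal hnorm hnn]

theorem stmt_3 (u : Matrix (Fin 2) (Fin 2) ℂ) (hu : u ∈ Matrix.unitaryGroup (Fin 2) ℂ)
    (htr : u.trace = 0) :
    ∃ (θ : ℝ) (w : Matrix (Fin 2) (Fin 2) ℂ), w ∈ Matrix.unitaryGroup (Fin 2) ℂ ∧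
      CU u = ((1 : Matrix (Fin 2) (Fin 2) ℂ) ⊗ₖ w) *
        ((phaseU θ ⊗ₖ (1 : Matrix (Fin 2) (Fin 2) ℂ)) * CU PZ) *
        ((1 : Matrix (Fin 2) (Fin 2) ℂ) ⊗ₖ wᴴ) := by
  obtain ⟨θ, w, hw, hwu⟩ := exists_conj u hu htr
  refine ⟨θ, w, hw, ?_⟩
  have hw2 : w * wᴴ = 1 := Matrix.mem_unitaryGroup_iff.mp hw
  have hpe00 : phaseU θ * e00 = e00 := by
    ext i j; fin_cases i <;> fin_cases j <;>
      simp [phaseU, e00, Matrix.mul_apply, Fin.sum_univ_two]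
  have hpe11 : phaseU θ * e11 = Complex.exp (θ * Complex.I) • e11 := by
    ext i j; fin_cases i <;> fin_cases j <;>
      simp [phaseU, e11, Matrix.mul_apply, Fin.sum_univ_two]
  have h1 : (phaseU θ ⊗ₖ (1 : Matrix (Fin 2) (Fin 2) ℂ)) * CU PZ
      = e00 ⊗ₖ (1 : Matrix (Fin 2) (Fin 2) ℂ)
        + Complex.exp (θ * Complex.I) • (e11 ⊗ₖ PZ) := by
    rw [CU, Matrix.mul_add, ← Matrix.mul_kronecker_mul, ← Matrix.mul_kronecker_mul,
      hpe00, hpe11, one_mul, one_mul, Matrix.smul_kronecker]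
  rw [CU, hwu, h1, Matrix.mul_add, Matrix.add_mul, Matrix.mul_smul, Matrix.smul_mul,
    ← Matrix.mul_kronecker_mul, ← Matrix.mul_kronecker_mul,
    ← Matrix.mul_kronecker_mul, ← Matrix.mul_kronecker_mul,
    one_mul, one_mul, mul_one, mul_one, mul_one, hw2, ← Matrix.kronecker_smul]


end
end

section
/- Every controlled unitary is locally unitary equivalent to a controlled phase: for any 2×2 complex unitary matrix u there exist a real number θ and 2×2 unitary matrices v₁, v₂, v₁', v₂' such that C_u = (v₁' ⊗ v₂') · C_{u_θ} · (v₁ ⊗ v₂), where u_θ = |0⟩⟨0| + e^{iθ}|1⟩⟨1| and C_{u_θ} = |0⟩⟨0| ⊗ I₂ + |1⟩⟨1| ⊗ u_θ. -/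
open Matrix Kronecker

noncomputable section

lemma div_col_norm (p z q w : ℂ) (n : ℝ) (hn : n ≠ 0) (h : p * z + q * w = ((n : ℂ)) ^ 2) :
    p / (n : ℂ) * (z / n) + q / n * (w / n) = 1 := by
  have hnC : (n : ℂ) ≠ 0 := by exact_mod_cast hn
  field_simp
  linear_combination h

lemma div_col_orth (p z q w : ℂ) (n m : ℝ) (hn : n ≠ 0) (hm : m ≠ 0) (h : p * z + q * w = 0) :
    p / (n : ℂ) * (z / m) + q / n * (w / m) = 0 := by
  have hnC : (n : ℂ) ≠ 0 := by exact_mod_cast hn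
  have hmC : (m : ℂ) ≠ 0 := by exact_mod_cast hm
  field_simp
  linear_combination h

lemma div_col_eq (p z q w v s : ℂ) (n : ℝ) (hn : n ≠ 0) (h : p * z + q * w = v * s) :
    p * (z / n) + q * (w / n) = v / n * s := by
  have hnC : (n : ℂ) ≠ 0 := by exact_mod_cast hn
  field_simp
  linear_combination h

lemma entry_eq (p q z w s : ℂ) (n : ℝ) (hn : n ≠ 0) (h : p * z + q * w = s) :
    p * (z / n) + q * (w / n) = s / n := by
  have hnC : (n : ℂ) ≠ 0 := by exact_mod_cast hn
  field_simp
  linear_combination h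

lemma exp_arg_of_abs_one {z : ℂ} (hz : ‖z‖ = 1) :
    Complex.exp (z.arg * Complex.I) = z := by
  have := Complex.norm_mul_exp_arg_mul_I z
  rwa [hz, Complex.ofReal_one, one_mul] at this

lemma abs_one_of_mul_conj {z : ℂ} (h : z * (starRingEnd ℂ) z = 1) : ‖z‖ = 1 := by
  rw [Complex.mul_conj] at h
  have h2 : Complex.normSq z = 1 := by exact_mod_cast h
  have := Complex.sq_norm z
  nlinarith [norm_nonneg z]

lemma col_norm (z w : ℂ) (n : ℝ) (hn : n ≠ 0) (h : n ^ 2 = Complex.normSq z + Complex.normSq w) :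
    (starRingEnd ℂ) (z / n) * (z / n) + (starRingEnd ℂ) (w / n) * (w / n) = 1 := by
  rw [map_div₀, map_div₀, Complex.conj_ofReal]
  have hz := Complex.mul_conj z
  have hw := Complex.mul_conj w
  have hnC : (n : ℂ) ≠ 0 := by exact_mod_cast hn
  have h' : (n : ℂ) ^ 2 = (Complex.normSq z : ℂ) + (Complex.normSq w : ℂ) := by
    exact_mod_cast congrArg (fun t : ℝ => (t : ℂ)) h
  field_simp
  linear_combination hz + hw - h'

lemma col_orth (z₁ w₁ z₂ w₂ : ℂ) (n m : ℝ) (hn : n ≠ 0) (hm : m ≠ 0)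
    (h : (starRingEnd ℂ) z₁ * z₂ + (starRingEnd ℂ) w₁ * w₂ = 0) :
    (starRingEnd ℂ) (z₁ / n) * (z₂ / m) + (starRingEnd ℂ) (w₁ / n) * (w₂ / m) = 0 := by
  rw [map_div₀, map_div₀, Complex.conj_ofReal]
  have hnC : (n : ℂ) ≠ 0 := by exact_mod_cast hn
  have hmC : (m : ℂ) ≠ 0 := by exact_mod_cast hm
  field_simp
  linear_combination h

lemma assembly (w : Matrix (Fin 2) (Fin 2) ℂ) (hw : w ∈ Matrix.unitaryGroup (Fin 2) ℂ)
    (z₁ z₂ : ℂ) (h1 : ‖z₁‖ = 1) (h2 : ‖z₂‖ = 1)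
    (u : Matrix (Fin 2) (Fin 2) ℂ)
    (hu : u = w * !![z₁, 0; 0, z₂] * star w) :
    ∃ (θ : ℝ) (v₁ v₂ v₁' v₂' : Matrix (Fin 2) (Fin 2) ℂ),
      v₁ ∈ Matrix.unitaryGroup (Fin 2) ℂ ∧ v₂ ∈ Matrix.unitaryGroup (Fin 2) ℂ ∧
      v₁' ∈ Matrix.unitaryGroup (Fin 2) ℂ ∧ v₂' ∈ Matrix.unitaryGroup (Fin 2) ℂ ∧
      CU u = (v₁' ⊗ₖ v₂') * CU (phaseU θ) * (v₁ ⊗ₖ v₂) := by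
  have hz1 : z₁ ≠ 0 := by
    intro h; rw [h] at h1; simp at h1
  refine ⟨(z₂ / z₁).arg, 1, star w, !![1, 0; 0, z₁], w, ?_, ?_, ?_, hw, ?_⟩
  · exact one_mem _
  · exact Unitary.star_mem hw
  · rw [Matrix.mem_unitaryGroup_iff']
    ext i j
    fin_cases i <;> fin_cases j <;>
      simp [Matrix.mul_apply, Fin.sum_univ_two, Matrix.star_apply, Matrix.one_apply]
    rw [mul_comm, Complex.mul_conj, Complex.normSq_eq_norm_sq, h1]; norm_num
  · have hexp : Complex.exp ((z₂ / z₁).arg * Complex.I) = z₂ / z₁ := by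
      apply exp_arg_of_abs_one
      rw [norm_div, h1, h2]; norm_num
    have hww : w * star w = 1 := Matrix.mem_unitaryGroup_iff.mp hw
    have h00 : !![(1:ℂ), 0; 0, z₁] * e00 = e00 := by
      ext i j; fin_cases i <;> fin_cases j <;> simp [e00, Matrix.mul_apply, Fin.sum_univ_two]
    have h11 : !![(1:ℂ), 0; 0, z₁] * e11 = z₁ • e11 := by
      ext i j; fin_cases i <;> fin_cases j <;> simp [e11, Matrix.mul_apply, Fin.sum_univ_two]
    have hph : w * (z₁ • phaseU ((z₂ / z₁).arg)) * star w = u := by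
      rw [hu]
      congr 2
      ext i j; fin_cases i <;> fin_cases j <;> simp [phaseU, hexp]
      field_simp
    have key : ∀ (e M : Matrix (Fin 2) (Fin 2) ℂ),
        (!![(1:ℂ),0;0,z₁] ⊗ₖ w) * (e ⊗ₖ M) * ((1 : Matrix (Fin 2) (Fin 2) ℂ) ⊗ₖ star w)
          = (!![(1:ℂ),0;0,z₁] * e * 1) ⊗ₖ (w * M * star w) := by
      intro e M
      rw [← Matrix.mul_kronecker_mul, ← Matrix.mul_kronecker_mul]
    rw [show CU (phaseU ((z₂ / z₁).arg))
        = e00 ⊗ₖ (1 : Matrix (Fin 2) (Fin 2) ℂ) + e11 ⊗ₖ phaseU ((z₂ / z₁).arg) from rfl]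
    rw [Matrix.mul_add, Matrix.add_mul, key, key, h00, h11, Matrix.mul_one, Matrix.mul_one,
      hww, Matrix.mul_one, Matrix.smul_kronecker, ← Matrix.kronecker_smul]
    rw [show z₁ • (w * phaseU ((z₂ / z₁).arg) * star w)
        = w * (z₁ • phaseU ((z₂ / z₁).arg)) * star w by
      simp [smul_mul_assoc, mul_smul_comm]]
    rw [hph, CU]

lemma diag_decomp (u : Matrix (Fin 2) (Fin 2) ℂ) (hu : u ∈ Matrix.unitaryGroup (Fin 2) ℂ) :
    ∃ (w : Matrix (Fin 2) (Fin 2) ℂ) (z₁ z₂ : ℂ),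
      w ∈ Matrix.unitaryGroup (Fin 2) ℂ ∧ ‖z₁‖ = 1 ∧ ‖z₂‖ = 1 ∧
      u = w * !![z₁, 0; 0, z₂] * star w := by
  have S := Matrix.mem_unitaryGroup_iff'.mp hu
  have T := Matrix.mem_unitaryGroup_iff.mp hu
  set a := u 0 0 with ha0
  set b := u 0 1 with hb0
  set c := u 1 0 with hc0
  set d := u 1 1 with hd0
  have ha1 : (starRingEnd ℂ) a * a + (starRingEnd ℂ) c * c = 1 := by
    have := congrFun (congrFun S 0) 0
    simpa [Matrix.mul_apply, Fin.sum_univ_two, Matrix.star_apply, Matrix.one_apply] using this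
  have ha4 : (starRingEnd ℂ) b * b + (starRingEnd ℂ) d * d = 1 := by
    have := congrFun (congrFun S 1) 1
    simpa [Matrix.mul_apply, Fin.sum_univ_two, Matrix.star_apply, Matrix.one_apply] using this
  have hb1 : a * (starRingEnd ℂ) a + b * (starRingEnd ℂ) b = 1 := by
    have := congrFun (congrFun T 0) 0
    simpa [Matrix.mul_apply, Fin.sum_univ_two, Matrix.star_apply, Matrix.one_apply] using this
  have hb3 : c * (starRingEnd ℂ) a + d * (starRingEnd ℂ) b = 0 := by
    have := congrFun (congrFun T 1) 0
    simpa [Matrix.mul_apply, Fin.sum_univ_two, Matrix.star_apply, Matrix.one_apply] using this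
  by_cases hb : b = 0
  · -- diagonal case
    have hbc : (starRingEnd ℂ) b = 0 := by rw [hb, map_zero]
    have habsa : ‖a‖ = 1 := by
      apply abs_one_of_mul_conj
      linear_combination hb1 - b * hbc
    have habsd : ‖d‖ = 1 := by
      apply abs_one_of_mul_conj
      linear_combination ha4 - (starRingEnd ℂ) d * d - ((starRingEnd ℂ) d * d - d * (starRingEnd ℂ) d) - (starRingEnd ℂ) b * hb + (starRingEnd ℂ) d * d
    have hc : c = 0 := by
      have hcc : (starRingEnd ℂ) c * c = 0 := by
        have haa : a * (starRingEnd ℂ) a = 1 := by linear_combination hb1 - b * hbc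
        linear_combination ha1 - haa + ((starRingEnd ℂ) a * a - a * (starRingEnd ℂ) a)
      rw [← Complex.normSq_eq_conj_mul_self] at hcc
      exact Complex.normSq_eq_zero.mp (by exact_mod_cast hcc)
    refine ⟨1, a, d, one_mem _, habsa, habsd, ?_⟩
    have : star (1 : Matrix (Fin 2) (Fin 2) ℂ) = 1 := by simp
    rw [this, Matrix.one_mul, Matrix.mul_one]
    ext i j
    fin_cases i <;> fin_cases j <;> simp [← ha0, ← hb0, ← hc0, ← hd0, hb, hc]
  · -- b ≠ 0 case
    set D := a * d - b * c with hDdef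
    have habsD : ‖D‖ = 1 := by
      have hdet := Matrix.det_of_mem_unitary hu
      have hdet2 : u.det = D := by rw [Matrix.det_fin_two]
      rw [hdet2] at hdet
      exact abs_one_of_mul_conj (by simpa [Complex.star_def] using (Unitary.mem_iff.mp hdet).2)
    set μ := Complex.exp ((D.arg / 2 : ℝ) * Complex.I) with hμdef
    have hμabs : ‖μ‖ = 1 := Complex.norm_exp_ofReal_mul_I _
    have hμ2 : μ * μ = D := by
      rw [hμdef, ← Complex.exp_add]
      rw [show ((D.arg / 2 : ℝ) : ℂ) * Complex.I + ((D.arg / 2 : ℝ) : ℂ) * Complex.I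
          = (D.arg : ℂ) * Complex.I by push_cast; ring]
      exact exp_arg_of_abs_one habsD
    have hμc : (starRingEnd ℂ) μ * μ = 1 := by
      rw [mul_comm, Complex.mul_conj]
      rw [Complex.normSq_eq_norm_sq, hμabs]; norm_num
    have hμne : μ ≠ 0 := Complex.exp_ne_zero _
    have hμcne : (starRingEnd ℂ) μ ≠ 0 := (map_ne_zero (starRingEnd ℂ)).mpr hμne
    set α := (starRingEnd ℂ) μ * a with hαdef
    set β := (starRingEnd ℂ) μ * b with hβdef
    have hβne : β ≠ 0 := mul_ne_zero hμcne hb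
    have hDa : d = D * (starRingEnd ℂ) a := by
      rw [hDdef]; linear_combination (-d) * hb1 + b * hb3
    have hCb : c = -(D * (starRingEnd ℂ) b) := by
      rw [hDdef]; linear_combination (-c) * hb1 + a * hb3
    have hδ : (starRingEnd ℂ) μ * d = (starRingEnd ℂ) α := by
      rw [hαdef, _root_.map_mul, Complex.conj_conj, hDa, ← hμ2]
      linear_combination (μ * (starRingEnd ℂ) a) * hμc
    have hγ : (starRingEnd ℂ) μ * c = -((starRingEnd ℂ) β) := by
      rw [hβdef, _root_.map_mul, Complex.conj_conj, hCb, ← hμ2]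
      linear_combination (-(μ * (starRingEnd ℂ) b)) * hμc
    have hK1 : α * (starRingEnd ℂ) α + β * (starRingEnd ℂ) β = 1 := by
      rw [hαdef, hβdef, _root_.map_mul, _root_.map_mul]
      simp only [Complex.conj_conj]
      linear_combination ((starRingEnd ℂ) μ * μ) * hb1 + hμc
    set x := α.re with hxdef
    have hnsq : Complex.normSq α + Complex.normSq β = 1 := by
      have h1 := hK1
      rw [Complex.mul_conj, Complex.mul_conj] at h1
      exact_mod_cast h1
    have hx1 : x ^ 2 ≤ 1 := by
      have h2 := Complex.normSq_nonneg β
      have h3 := Complex.normSq_apply α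
      nlinarith [sq_nonneg α.im]
    set y := Real.sqrt (1 - x ^ 2) with hydef
    have hy2 : y ^ 2 = 1 - x ^ 2 := Real.sq_sqrt (by nlinarith)
    set lam := (x : ℂ) + (y : ℂ) * Complex.I with hlamdef
    have hconj : (starRingEnd ℂ) lam = (x : ℂ) - (y : ℂ) * Complex.I := by
      rw [hlamdef, map_add, _root_.map_mul, Complex.conj_ofReal, Complex.conj_ofReal, Complex.conj_I]
      ring
    have hyC : ((y : ℂ)) ^ 2 = 1 - (x : ℂ) ^ 2 := by exact_mod_cast congrArg (fun t : ℝ => (t : ℂ)) hy2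
    have hl1 : lam * (starRingEnd ℂ) lam = 1 := by
      rw [hconj, hlamdef]
      linear_combination (-Complex.I ^ 2) * hyC + ((x : ℂ) ^ 2 - 1) * Complex.I_sq
    have hsum : lam + (starRingEnd ℂ) lam = α + (starRingEnd ℂ) α := by
      rw [hconj, hlamdef, Complex.add_conj]
      push_cast
      ring
    have habslam : ‖lam‖ = 1 := abs_one_of_mul_conj hl1
    have hβpos : 0 < Complex.normSq β := Complex.normSq_pos.mpr hβne
    set n₁ := Real.sqrt (Complex.normSq β + Complex.normSq (lam - α)) with hn1def
    set n₂ := Real.sqrt (Complex.normSq β + Complex.normSq ((starRingEnd ℂ) lam - α)) with hn2def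
    have hq1 : 0 < Complex.normSq β + Complex.normSq (lam - α) := by
      have := Complex.normSq_nonneg (lam - α); linarith
    have hq2 : 0 < Complex.normSq β + Complex.normSq ((starRingEnd ℂ) lam - α) := by
      have := Complex.normSq_nonneg ((starRingEnd ℂ) lam - α); linarith
    have hn1pos : 0 < n₁ := Real.sqrt_pos.mpr hq1
    have hn2pos : 0 < n₂ := Real.sqrt_pos.mpr hq2
    have hn1 : n₁ ^ 2 = Complex.normSq β + Complex.normSq (lam - α) := Real.sq_sqrt hq1.le
    have hn2 : n₂ ^ 2 = Complex.normSq β + Complex.normSq ((starRingEnd ℂ) lam - α) :=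
      Real.sq_sqrt hq2.le
    have hn1ne : n₁ ≠ 0 := ne_of_gt hn1pos
    have hn2ne : n₂ ≠ 0 := ne_of_gt hn2pos
    set w : Matrix (Fin 2) (Fin 2) ℂ :=
      !![β / n₁, β / n₂; (lam - α) / n₁, ((starRingEnd ℂ) lam - α) / n₂] with hwdef
    have hwmem : w ∈ Matrix.unitaryGroup (Fin 2) ℂ := by
      rw [Matrix.mem_unitaryGroup_iff']
      ext i j
      fin_cases i <;> fin_cases j <;>
        simp [hwdef, Matrix.mul_apply, Fin.sum_univ_two, Matrix.star_apply, Matrix.one_apply]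
      · have hn1C : ((n₁ : ℂ)) ^ 2 = (Complex.normSq β : ℂ) + (Complex.normSq (lam - α) : ℂ) := by
          exact_mod_cast congrArg (fun t : ℝ => (t : ℂ)) hn1
        apply div_col_norm _ _ _ _ _ hn1ne
        rw [hn1C, Complex.normSq_eq_conj_mul_self, Complex.normSq_eq_conj_mul_self, map_sub]
      · apply div_col_orth _ _ _ _ _ _ hn1ne hn2ne
        linear_combination hK1 + (starRingEnd ℂ) lam * hsum - hl1
      · apply div_col_orth _ _ _ _ _ _ hn2ne hn1ne
        linear_combination hK1 + lam * hsum - hl1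
      · have hn2C : ((n₂ : ℂ)) ^ 2 = (Complex.normSq β : ℂ) + (Complex.normSq ((starRingEnd ℂ) lam - α) : ℂ) := by
          exact_mod_cast congrArg (fun t : ℝ => (t : ℂ)) hn2
        apply div_col_norm _ _ _ _ _ hn2ne
        rw [hn2C, Complex.normSq_eq_conj_mul_self, Complex.normSq_eq_conj_mul_self, map_sub,
          Complex.conj_conj]
    have haα : a = μ * α := by rw [hαdef]; linear_combination (-a) * hμc
    have hbβ : b = μ * β := by rw [hβdef]; linear_combination (-b) * hμc
    have hcγ : c = -(μ * (starRingEnd ℂ) β) := by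
      linear_combination μ * hγ - c * hμc
    have hdδ : d = μ * (starRingEnd ℂ) α := by
      linear_combination μ * hδ - d * hμc
    have hUW : u * w = w * !![μ * lam, 0; 0, μ * (starRingEnd ℂ) lam] := by
      ext i j
      fin_cases i <;> fin_cases j <;>
        simp [hwdef, Matrix.mul_apply, Fin.sum_univ_two]
      · apply div_col_eq _ _ _ _ _ _ _ hn1ne
        linear_combination β * haα + (lam - α) * hbβ
      · apply div_col_eq _ _ _ _ _ _ _ hn2ne
        linear_combination β * haα + ((starRingEnd ℂ) lam - α) * hbβ
      · apply div_col_eq _ _ _ _ _ _ _ hn1ne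
        linear_combination β * hcγ + (lam - α) * hdδ + (-μ) * hK1 + (-(μ * lam)) * hsum + μ * hl1
      · apply div_col_eq _ _ _ _ _ _ _ hn2ne
        linear_combination β * hcγ + ((starRingEnd ℂ) lam - α) * hdδ + (-μ) * hK1 +
          (-(μ * (starRingEnd ℂ) lam)) * hsum + μ * hl1
    have hwsw : w * star w = 1 := Matrix.mem_unitaryGroup_iff.mp hwmem
    refine ⟨w, μ * lam, μ * (starRingEnd ℂ) lam, hwmem, ?_, ?_, ?_⟩
    · rw [norm_mul, hμabs, habslam, one_mul]
    · rw [norm_mul, hμabs, Complex.norm_conj, habslam, one_mul]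
    · calc u = u * (w * star w) := by rw [hwsw, Matrix.mul_one]
        _ = u * w * star w := by rw [Matrix.mul_assoc]
        _ = w * !![μ * lam, 0; 0, μ * (starRingEnd ℂ) lam] * star w := by rw [hUW]

theorem stmt_4 (u : Matrix (Fin 2) (Fin 2) ℂ) (hu : u ∈ Matrix.unitaryGroup (Fin 2) ℂ) :
    ∃ (θ : ℝ) (v₁ v₂ v₁' v₂' : Matrix (Fin 2) (Fin 2) ℂ),
      v₁ ∈ Matrix.unitaryGroup (Fin 2) ℂ ∧ v₂ ∈ Matrix.unitaryGroup (Fin 2) ℂ ∧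
      v₁' ∈ Matrix.unitaryGroup (Fin 2) ℂ ∧ v₂' ∈ Matrix.unitaryGroup (Fin 2) ℂ ∧
      CU u = (v₁' ⊗ₖ v₂') * CU (phaseU θ) * (v₁ ⊗ₖ v₂) := by
  obtain ⟨w, z₁, z₂, hw, h1, h2, hdec⟩ := diag_decomp u hu
  exact assembly w hw z₁ z₂ h1 h2 u hdec

end
end

section
/- Let m ≤ n, let Ψ : Fin m × Fin n → ℂ be a vector in ℂ^m ⊗ ℂ^n whose reshaped m×n matrix M (with M(i,k) = Ψ(i,k)) has rank m (i.e., Ψ has full Schmidt rank m on the first factor), and let Π be a positive semidefinite m×m matrix. Define the n×n matrix ρ by ρ(k,l) = Σ_{i,i' ∈ Fin m} Π(i,i')·Ψ(i',k)·conj(Ψ(i,l)) (this is the partial trace over the first factor of (Π ⊗ I_n)|Ψ⟩⟨Ψ|). Then rank ρ = rank Π. In particular, ρ has rank 1 only if Π has rank 1. -/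
open Matrix ComplexOrder

noncomputable section

theorem stmt_7 (m n : ℕ) (hmn : m ≤ n) (Ψ : Fin m × Fin n → ℂ)
    (hΨ : (Matrix.of fun (i : Fin m) (k : Fin n) => Ψ (i, k)).rank = m)
    (P : Matrix (Fin m) (Fin m) ℂ) (hP : P.PosSemidef)
    (ρ : Matrix (Fin n) (Fin n) ℂ)
    (hρ : ρ = Matrix.of fun (k l : Fin n) =>
      ∑ i : Fin m, ∑ i' : Fin m, P i i' * Ψ (i', k) * star (Ψ (i, l))) :
    ρ.rank = P.rank := by
  set M : Matrix (Fin m) (Fin n) ℂ := Matrix.of fun (i : Fin m) (k : Fin n) => Ψ (i, k) with hM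
  set A : Matrix (Fin n) (Fin m) ℂ := Mᵀ with hA
  have hQ : (Pᵀ).PosSemidef := hP.transpose
  set S : Matrix (Fin m) (Fin m) ℂ := open scoped MatrixOrder in CFC.sqrt (Pᵀ) with hS
  have hSherm : Sᴴ = S := by
    open scoped MatrixOrder in exact (CFC.sqrt_nonneg (Pᵀ)).posSemidef.1
  have hSS : S * S = Pᵀ := by
    open scoped MatrixOrder in exact CFC.sqrt_mul_sqrt_self (Pᵀ) hQ.nonneg
  -- ρ = (A * S) * (A * S)ᴴ
  have hfact : ρ = (A * S) * (A * S)ᴴ := by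
    have : (A * S) * (A * S)ᴴ = A * Pᵀ * Aᴴ := by
      rw [conjTranspose_mul, hSherm, ← hSS]
      simp only [Matrix.mul_assoc]
    rw [this, hρ]
    ext k l
    simp only [Matrix.mul_apply, Matrix.of_apply, conjTranspose_apply, transpose_apply,
      hA, hM, Finset.sum_mul, Finset.mul_sum]
    refine Finset.sum_congr rfl fun i _ => Finset.sum_congr rfl fun i' _ => ?_
    ring
  -- A is injective
  have hArank : A.rank = m := by rw [hA, M.rank_transpose, hΨ]
  have hAinj : Function.Injective A.mulVecLin := by
    rw [← LinearMap.ker_eq_bot]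
    have h1 := A.mulVecLin.finrank_range_add_finrank_ker
    rw [show Module.finrank ℂ (LinearMap.range A.mulVecLin) = A.rank from rfl, hArank,
      Module.finrank_pi] at h1
    simp only [Fintype.card_fin] at h1
    have : Module.finrank ℂ (LinearMap.ker A.mulVecLin) = 0 := by omega
    exact Submodule.finrank_eq_zero.mp this
  -- rank (A * S) = rank S
  have hAS : (A * S).rank = S.rank := by
    unfold Matrix.rank
    rw [Matrix.mulVecLin_mul, LinearMap.range_comp]
    exact (LinearEquiv.finrank_eq
      (Submodule.equivMapOfInjective _ hAinj (LinearMap.range S.mulVecLin))).symm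
  -- rank S = rank P
  have hSrank : S.rank = P.rank := by
    have : (Sᴴ * S).rank = S.rank := S.rank_conjTranspose_mul_self
    rw [hSherm, hSS] at this
    rw [← this, P.rank_transpose]
  rw [hfact, (A * S).rank_self_mul_conjTranspose, hAS, hSrank]

end
end

section
/- (Lemma 1.) Let d ≥ 1 and let H_{A₁} = H_{A₂} = ℂ^{d²}. Let Λ_{A₁} and Λ_{A₂} be CPTP maps on d²×d² complex matrices, given in Kraus form by families {E_a} and {F_b} with Σ_a E_a†E_a = I and Σ_b F_b†F_b = I. Let ρ be a density matrix on H_{A₁} ⊗ H_{A₂} (a positive semidefinite matrix of trace 1 indexed by (Fin d² × Fin d²)), and suppose Σ_{a,b} (E_a ⊗ F_b)·ρ·(E_a ⊗ F_b)† = |Θ⟩⟨Θ|, where Θ = Σ_{k ∈ Fin d²} √λ_k · (α_k ⊗ β_k) with λ_k > 0 for all k, Σ_k λ_k = 1, and {α_k}, {β_k} orthonormal bases of ℂ^{d²}. Then ρ is pure with the same Schmidt coefficients as Θ: there exist a unit vector φ ∈ H_{A₁} ⊗ H_{A₂} and orthonormal bases {a_k}, {b_k} of ℂ^{d²} such that ρ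 = |φ⟩⟨φ| and φ = Σ_k √λ_k · (a_k ⊗ b_k). -/
open Matrix Kronecker ComplexOrder

noncomputable section

/-- A family of vectors in ℂ^n indexed by `Fin n` is orthonormal (hence an orthonormal basis). -/
def OrthonormalFamily (n : ℕ) (α : Fin n → Fin n → ℂ) : Prop :=
  ∀ k k' : Fin n, ∑ i : Fin n, star (α k i) * α k' i = if k = k' then 1 else 0

section Helpers

lemma kron_mul_entry {n : ℕ} {m : Type*} [Fintype m] (E F : Matrix (Fin n) (Fin n) ℂ)
    (G : Matrix (Fin n × Fin n) m ℂ) (i j : Fin n) (p : m) :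
    ((E ⊗ₖ F) * G) (i, j) p
      = (E * (Matrix.of fun i' j' => G (i', j') p) * Fᵀ) i j := by
  simp only [Matrix.mul_apply, Fintype.sum_prod_type, kroneckerMap_apply, Matrix.of_apply,
    Matrix.transpose_apply, Finset.sum_mul, Finset.mul_sum]
  rw [Finset.sum_comm]
  apply Finset.sum_congr rfl; intro j' _
  apply Finset.sum_congr rfl; intro i' _
  ring

lemma kronH {n : ℕ} (X Y : Matrix (Fin n) (Fin n) ℂ) : (X ⊗ₖ Y)ᴴ = Xᴴ ⊗ₖ Yᴴ := by
  ext ⟨i, j⟩ ⟨i', j'⟩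
  simp [Matrix.conjTranspose_apply, kroneckerMap_apply]

lemma sum_kron {n : ℕ} {ι : Type*} (s : Finset ι) (M : ι → Matrix (Fin n) (Fin n) ℂ)
    (C : Matrix (Fin n) (Fin n) ℂ) :
    (∑ a ∈ s, M a) ⊗ₖ C = ∑ a ∈ s, (M a ⊗ₖ C) := by
  ext ⟨i, j⟩ ⟨i', j'⟩
  simp [kroneckerMap_apply, Finset.sum_apply, Matrix.sum_apply, Finset.sum_mul]

lemma kron_sum {n : ℕ} {ι : Type*} (s : Finset ι) (C : Matrix (Fin n) (Fin n) ℂ)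
    (M : ι → Matrix (Fin n) (Fin n) ℂ) :
    C ⊗ₖ (∑ a ∈ s, M a) = ∑ a ∈ s, (C ⊗ₖ M a) := by
  ext ⟨i, j⟩ ⟨i', j'⟩
  simp [kroneckerMap_apply, Finset.sum_apply, Matrix.sum_apply, Finset.mul_sum]

lemma col_span {m p' : Type*} [Fintype m] (Θ : m → ℂ) (hΘ1 : ∑ i, star (Θ i) * Θ i = 1)
    (G : Matrix m p' ℂ)
    (h : ∀ x : m → ℂ, (∑ i, star (Θ i) * x i) = 0 → ∀ p, ∑ i, star (x i) * G i p = 0) :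
    ∀ p, ∃ c : ℂ, ∀ i, G i p = c * Θ i := by
  intro p
  set c := ∑ i, star (Θ i) * G i p with hc
  refine ⟨c, ?_⟩
  set x : m → ℂ := fun i => G i p - c * Θ i with hx
  have hxΘ : (∑ i, star (Θ i) * x i) = 0 := by
    simp only [hx, mul_sub, Finset.sum_sub_distrib]
    rw [← hc]
    have : ∑ i, star (Θ i) * (c * Θ i) = c * ∑ i, star (Θ i) * Θ i := by
      rw [Finset.mul_sum]; apply Finset.sum_congr rfl; intro i _; ring
    rw [this, hΘ1, mul_one, sub_self]
  have h1 := h x hxΘ p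
  have h2 : ∑ i, star (x i) * Θ i = 0 := by
    have := congrArg star hxΘ
    simpa [star_sum, mul_comm] using this
  have hxx : ∑ i, star (x i) * x i = 0 := by
    have : ∑ i, star (x i) * x i
        = (∑ i, star (x i) * G i p) - c * ∑ i, star (x i) * Θ i := by
      rw [Finset.mul_sum, ← Finset.sum_sub_distrib]
      apply Finset.sum_congr rfl; intro i _
      simp only [hx]; ring
    rw [this, h1, h2, mul_zero, sub_zero]
  have hxz : ∀ i, x i = 0 := by
    have hcast : (∑ i, Complex.normSq (x i) : ℝ) = 0 := by
      have : (↑(∑ i, Complex.normSq (x i)) : ℂ) = 0 := by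
        push_cast
        rw [← hxx]
        apply Finset.sum_congr rfl; intro i _
        rw [Complex.star_def]
        exact Complex.normSq_eq_conj_mul_self
      exact_mod_cast this
    intro i
    have := (Finset.sum_eq_zero_iff_of_nonneg
      (fun i _ => Complex.normSq_nonneg (x i))).mp hcast i (Finset.mem_univ i)
    exact Complex.normSq_eq_zero.mp this
  intro i
  have h3 := hxz i
  simp only [hx] at h3
  linear_combination h3

lemma sum3_zero {A B C : Type*} [Fintype A] [Fintype B] [Fintype C]
    (f : A → B → C → ℝ) (h0 : ∀ a b c, 0 ≤ f a b c)
    (h : ∑ a, ∑ b, ∑ c, f a b c = 0) : ∀ a b c, f a b c = 0 := by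
  intro a b c
  have h1 : ∀ a, 0 ≤ ∑ b, ∑ c, f a b c :=
    fun a => Finset.sum_nonneg fun b _ => Finset.sum_nonneg fun c _ => h0 a b c
  have h2 := (Finset.sum_eq_zero_iff_of_nonneg (fun a _ => h1 a)).mp h a (Finset.mem_univ a)
  have h3 : ∀ b, 0 ≤ ∑ c, f a b c := fun b => Finset.sum_nonneg fun c _ => h0 a b c
  have h4 := (Finset.sum_eq_zero_iff_of_nonneg (fun b _ => h3 b)).mp h2 b (Finset.mem_univ b)
  exact (Finset.sum_eq_zero_iff_of_nonneg (fun c _ => h0 a b c)).mp h4 c (Finset.mem_univ c)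

lemma sum_swap3 {A B C M : Type*} [Fintype A] [Fintype B] [Fintype C] [AddCommMonoid M]
    (f : A → B → C → M) :
    ∑ a, ∑ b, ∑ c, f a b c = ∑ c, ∑ a, ∑ b, f a b c := by
  calc ∑ a, ∑ b, ∑ c, f a b c = ∑ a, ∑ c, ∑ b, f a b c := by
        apply Finset.sum_congr rfl; intro a _; rw [Finset.sum_comm]
    _ = ∑ c, ∑ a, ∑ b, f a b c := Finset.sum_comm

lemma sum_swap4 {A B C D M : Type*} [Fintype A] [Fintype B] [Fintype C] [Fintype D]
    [AddCommMonoid M] (f : A → B → C → D → M) :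
    ∑ a, ∑ b, ∑ c, ∑ d, f a b c d = ∑ c, ∑ d, ∑ a, ∑ b, f a b c d := by
  calc ∑ a, ∑ b, ∑ c, ∑ d, f a b c d = ∑ a, ∑ c, ∑ b, ∑ d, f a b c d := by
        apply Finset.sum_congr rfl; intro a _; rw [Finset.sum_comm]
    _ = ∑ c, ∑ a, ∑ b, ∑ d, f a b c d := Finset.sum_comm
    _ = ∑ c, ∑ a, ∑ d, ∑ b, f a b c d := by
        apply Finset.sum_congr rfl; intro c _
        apply Finset.sum_congr rfl; intro a _; rw [Finset.sum_comm]
    _ = ∑ c, ∑ d, ∑ a, ∑ b, f a b c d := by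
        apply Finset.sum_congr rfl; intro c _; rw [Finset.sum_comm]

lemma orth_conj {n : ℕ} (γ : ℂ) (hγ : star γ * γ = 1) (R : Matrix (Fin n) (Fin n) ℂ)
    (hR : Rᴴ * R = 1) (α : Fin n → Fin n → ℂ) (hα : OrthonormalFamily n α) :
    OrthonormalFamily n (fun k i => γ * ∑ i', R i i' * α k i') := by
  intro k k'
  have key : ∀ i : Fin n,
      star (γ * ∑ i', R i i' * α k i') * (γ * ∑ i', R i i' * α k' i')
      = (star γ * γ) * ∑ i', ∑ i'', (star (R i i') * R i i'') * (star (α k i') * α k' i'') := by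
    intro i
    calc star (γ * ∑ i', R i i' * α k i') * (γ * ∑ i', R i i' * α k' i')
        = (star γ * γ) * ((star (∑ i', R i i' * α k i')) * (∑ i'', R i i'' * α k' i'')) := by
          rw [star_mul']; ring
      _ = (star γ * γ) * ((∑ i', star (R i i' * α k i')) * (∑ i'', R i i'' * α k' i'')) := by
          rw [star_sum]
      _ = (star γ * γ) * (∑ i', ∑ i'', star (R i i' * α k i') * (R i i'' * α k' i'')) := by
          rw [Finset.sum_mul_sum]
      _ = (star γ * γ) * ∑ i', ∑ i'', (star (R i i') * R i i'') * (star (α k i') * α k' i'') := by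
          congr 1
          apply Finset.sum_congr rfl; intro i' _
          apply Finset.sum_congr rfl; intro i'' _
          rw [star_mul']; ring
  calc ∑ i, star (γ * ∑ i', R i i' * α k i') * (γ * ∑ i', R i i' * α k' i')
      = ∑ i, (star γ * γ) * ∑ i', ∑ i'', (star (R i i') * R i i'') * (star (α k i') * α k' i'') :=
        Finset.sum_congr rfl fun i _ => key i
    _ = ∑ i', ∑ i'', (∑ i, star (R i i') * R i i'') * (star (α k i') * α k' i'') := by
        simp only [hγ, one_mul]
        rw [Finset.sum_comm]
        apply Finset.sum_congr rfl; intro i' _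
        rw [Finset.sum_comm]
        apply Finset.sum_congr rfl; intro i'' _
        rw [Finset.sum_mul]
    _ = ∑ i', ∑ i'', ((1 : Matrix (Fin n) (Fin n) ℂ) i' i'') * (star (α k i') * α k' i'') := by
        apply Finset.sum_congr rfl; intro i' _
        apply Finset.sum_congr rfl; intro i'' _
        congr 1
        rw [← hR, Matrix.mul_apply]
        apply Finset.sum_congr rfl; intro i _
        rw [Matrix.conjTranspose_apply]
    _ = ∑ i', star (α k i') * α k' i' := by
        apply Finset.sum_congr rfl; intro i' _
        rw [Finset.sum_eq_single i']
        · simp [Matrix.one_apply]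
        · intro i'' _ hne
          simp [Matrix.one_apply, Ne.symm hne]
        · intro h; exact absurd (Finset.mem_univ i') h
    _ = if k = k' then 1 else 0 := hα k k'

lemma frob_trace {m p : Type*} [Fintype m] [Fintype p] (X : Matrix m p ℂ) :
    Matrix.trace (Xᴴ * X) = ↑(∑ j, ∑ i, Complex.normSq (X i j)) := by
  rw [Matrix.trace]
  push_cast
  apply Finset.sum_congr rfl; intro j _
  rw [Matrix.diag_apply, Matrix.mul_apply]
  apply Finset.sum_congr rfl; intro i _
  rw [Matrix.conjTranspose_apply, Complex.star_def]
  rw [mul_comm, Complex.mul_conj]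

lemma cancel_mid {n : ℕ} {X Z A B : Matrix (Fin n) (Fin n) ℂ} (hX : IsUnit X) (hZ : IsUnit Z)
    (h : X * A * Z = X * B * Z) : A = B :=
  hX.mul_left_cancel (hZ.mul_right_cancel h)

end Helpers

set_option maxHeartbeats 2000000 in
theorem stmt_11 (d : ℕ) (hd : 1 ≤ d) (N N' : ℕ)
    (E : Fin N → Matrix (Fin (d ^ 2)) (Fin (d ^ 2)) ℂ)
    (F : Fin N' → Matrix (Fin (d ^ 2)) (Fin (d ^ 2)) ℂ)
    (hE : ∑ a : Fin N, (E a)ᴴ * E a = 1)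
    (hF : ∑ b : Fin N', (F b)ᴴ * F b = 1)
    (ρ : Matrix (Fin (d ^ 2) × Fin (d ^ 2)) (Fin (d ^ 2) × Fin (d ^ 2)) ℂ)
    (hρ : ρ.PosSemidef) (hρtr : ρ.trace = 1)
    (lam : Fin (d ^ 2) → ℝ) (hlam : ∀ k, 0 < lam k) (hlamsum : ∑ k, lam k = 1)
    (α β : Fin (d ^ 2) → Fin (d ^ 2) → ℂ)
    (hα : OrthonormalFamily (d ^ 2) α) (hβ : OrthonormalFamily (d ^ 2) β)
    (Θ : Fin (d ^ 2) × Fin (d ^ 2) → ℂ)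
    (hΘ : ∀ (i j : Fin (d ^ 2)),
      Θ (i, j) = ∑ k : Fin (d ^ 2), (Real.sqrt (lam k) : ℂ) * α k i * β k j)
    (hmap : ∑ a : Fin N, ∑ b : Fin N',
        (E a ⊗ₖ F b) * ρ * (E a ⊗ₖ F b)ᴴ = Matrix.of fun x y => Θ x * star (Θ y)) :
    ∃ (φ : Fin (d ^ 2) × Fin (d ^ 2) → ℂ) (A B : Fin (d ^ 2) → Fin (d ^ 2) → ℂ),
      OrthonormalFamily (d ^ 2) A ∧ OrthonormalFamily (d ^ 2) B ∧
      (∑ x, Complex.normSq (φ x) = 1) ∧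
      ρ = Matrix.of (fun x y => φ x * star (φ y)) ∧
      ∀ (i j : Fin (d ^ 2)),
        φ (i, j) = ∑ k : Fin (d ^ 2), (Real.sqrt (lam k) : ℂ) * A k i * B k j := by
  classical
  obtain ⟨S, hS⟩ : ∃ S : Matrix (Fin (d ^ 2) × Fin (d ^ 2)) (Fin (d ^ 2) × Fin (d ^ 2)) ℂ,
      ρ = Sᴴ * S := by
    open scoped MatrixOrder in exact CStarAlgebra.nonneg_iff_eq_star_mul_self.mp hρ.nonneg
  set G := Sᴴ with hGdef
  have hρG : ρ = G * Gᴴ := by rw [hS, hGdef, Matrix.conjTranspose_conjTranspose]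
  -- Kraus normalization for the product channel
  have hKK : ∑ a : Fin N, ∑ b : Fin N', (E a ⊗ₖ F b)ᴴ * (E a ⊗ₖ F b) = 1 := by
    calc ∑ a : Fin N, ∑ b : Fin N', (E a ⊗ₖ F b)ᴴ * (E a ⊗ₖ F b)
        = ∑ a : Fin N, ∑ b : Fin N', ((E a)ᴴ * E a) ⊗ₖ ((F b)ᴴ * F b) := by
          apply Finset.sum_congr rfl; intro a _
          apply Finset.sum_congr rfl; intro b _
          rw [kronH, ← Matrix.mul_kronecker_mul]
      _ = ∑ a : Fin N, ((E a)ᴴ * E a) ⊗ₖ (∑ b : Fin N', (F b)ᴴ * F b) := by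
          apply Finset.sum_congr rfl; intro a _
          rw [kron_sum]
      _ = (∑ a : Fin N, (E a)ᴴ * E a) ⊗ₖ (∑ b : Fin N', (F b)ᴴ * F b) := by rw [sum_kron]
      _ = 1 := by rw [hE, hF, Matrix.one_kronecker_one]
  -- normalization of Θ
  have hΘnorm : ∑ x, star (Θ x) * Θ x = 1 := by
    have h2 : ∑ a : Fin N, ∑ b : Fin N', (((E a ⊗ₖ F b)ᴴ * (E a ⊗ₖ F b)) * ρ) = ρ := by
      calc ∑ a : Fin N, ∑ b : Fin N', (((E a ⊗ₖ F b)ᴴ * (E a ⊗ₖ F b)) * ρ)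
          = (∑ a : Fin N, ∑ b : Fin N', ((E a ⊗ₖ F b)ᴴ * (E a ⊗ₖ F b))) * ρ := by
            rw [Finset.sum_mul]
            apply Finset.sum_congr rfl; intro a _
            rw [Finset.sum_mul]
        _ = ρ := by rw [hKK, one_mul]
    have h3 : (∑ a : Fin N, ∑ b : Fin N',
        (E a ⊗ₖ F b) * ρ * (E a ⊗ₖ F b)ᴴ).trace = ρ.trace := by
      rw [Matrix.trace_sum]
      simp_rw [Matrix.trace_sum]
      calc ∑ a : Fin N, ∑ b : Fin N', ((E a ⊗ₖ F b) * ρ * (E a ⊗ₖ F b)ᴴ).trace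
          = ∑ a : Fin N, ∑ b : Fin N', (((E a ⊗ₖ F b)ᴴ * (E a ⊗ₖ F b)) * ρ).trace := by
            apply Finset.sum_congr rfl; intro a _
            apply Finset.sum_congr rfl; intro b _
            exact Matrix.trace_mul_cycle (E a ⊗ₖ F b) ρ (E a ⊗ₖ F b)ᴴ
        _ = (∑ a : Fin N, ∑ b : Fin N', ((E a ⊗ₖ F b)ᴴ * (E a ⊗ₖ F b)) * ρ).trace := by
            rw [Matrix.trace_sum]
            simp_rw [Matrix.trace_sum]
        _ = ρ.trace := by rw [h2]
    rw [hmap, hρtr] at h3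
    rw [Matrix.trace] at h3
    have h4 : ∑ x, star (Θ x) * Θ x
        = ∑ x, (Matrix.of fun x y => Θ x * star (Θ y)).diag x := by
      apply Finset.sum_congr rfl; intro x _
      simp only [Matrix.diag_apply, Matrix.of_apply]
      exact mul_comm _ _
    rw [h4]
    exact h3
  -- W a b = K_ab * G; every column of W a b is a multiple of Θ
  set W : Fin N → Fin N' → Matrix (Fin (d ^ 2) × Fin (d ^ 2)) (Fin (d ^ 2) × Fin (d ^ 2)) ℂ :=
    fun a b => (E a ⊗ₖ F b) * G with hWdef
  have hWWH : ∀ a b, W a b * (W a b)ᴴ = (E a ⊗ₖ F b) * ρ * (E a ⊗ₖ F b)ᴴ := by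
    intro a b
    simp only [hWdef, Matrix.conjTranspose_mul, hρG, Matrix.mul_assoc]
  have hWsum : ∑ a : Fin N, ∑ b : Fin N', W a b * (W a b)ᴴ
      = Matrix.of fun x y => Θ x * star (Θ y) := by
    simp_rw [hWWH]
    exact hmap
  have horth : ∀ x : (Fin (d ^ 2) × Fin (d ^ 2)) → ℂ, (∑ i, star (Θ i) * x i) = 0 →
      ∀ a b p, ∑ i, star (x i) * W a b i p = 0 := by
    intro x hx
    have hq : ∀ a b, ∑ p, (∑ i, star (x i) * W a b i p) * star (∑ i, star (x i) * W a b i p)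
        = ∑ i, ∑ i', star (x i) * ((W a b * (W a b)ᴴ) i i') * x i' := by
      intro a b
      have step : ∀ i i', star (x i) * ((W a b * (W a b)ᴴ) i i') * x i'
          = ∑ p, (star (x i) * W a b i p) * (star (W a b i' p) * x i') := by
        intro i i'
        rw [Matrix.mul_apply]
        simp only [Matrix.conjTranspose_apply]
        rw [Finset.mul_sum, Finset.sum_mul]
        apply Finset.sum_congr rfl; intro p _
        ring
      calc ∑ p, (∑ i, star (x i) * W a b i p) * star (∑ i, star (x i) * W a b i p)
          = ∑ p, (∑ i, star (x i) * W a b i p) * (∑ i', star (W a b i' p) * x i') := by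
            apply Finset.sum_congr rfl; intro p _
            congr 1
            rw [star_sum]
            apply Finset.sum_congr rfl; intro i' _
            rw [star_mul', star_star, mul_comm]
        _ = ∑ p, ∑ i, ∑ i', (star (x i) * W a b i p) * (star (W a b i' p) * x i') := by
            apply Finset.sum_congr rfl; intro p _
            rw [Finset.sum_mul_sum]
        _ = ∑ i, ∑ i', ∑ p, (star (x i) * W a b i p) * (star (W a b i' p) * x i') :=
            (sum_swap3 fun i i' p => (star (x i) * W a b i p) * (star (W a b i' p) * x i')).symm
        _ = ∑ i, ∑ i', star (x i) * ((W a b * (W a b)ᴴ) i i') * x i' := by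
            apply Finset.sum_congr rfl; intro i _
            apply Finset.sum_congr rfl; intro i' _
            exact (step i i').symm
    have htot : ∑ a : Fin N, ∑ b : Fin N',
        ∑ p, (∑ i, star (x i) * W a b i p) * star (∑ i, star (x i) * W a b i p) = 0 := by
      simp_rw [hq]
      rw [sum_swap4 fun a b i i' => star (x i) * ((W a b * (W a b)ᴴ) i i') * x i']
      have hinner : ∀ i i', ∑ a : Fin N, ∑ b : Fin N',
          star (x i) * ((W a b * (W a b)ᴴ) i i') * x i'
          = star (x i) * (Θ i * star (Θ i')) * x i' := by
        intro i i'
        have hent : ∑ a : Fin N, ∑ b : Fin N', (W a b * (W a b)ᴴ) i i' = Θ i * star (Θ i') := by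
          have h5 := congrArg (fun M : Matrix (Fin (d ^ 2) × Fin (d ^ 2))
            (Fin (d ^ 2) × Fin (d ^ 2)) ℂ => M i i') hWsum
          simpa [Matrix.sum_apply] using h5
        rw [← hent]
        conv_rhs => rw [Finset.mul_sum, Finset.sum_mul]
        apply Finset.sum_congr rfl; intro a _
        conv_rhs => rw [Finset.mul_sum, Finset.sum_mul]
      calc ∑ i, ∑ i', ∑ a : Fin N, ∑ b : Fin N',
            star (x i) * ((W a b * (W a b)ᴴ) i i') * x i'
          = ∑ i, ∑ i', star (x i) * (Θ i * star (Θ i')) * x i' := by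
            apply Finset.sum_congr rfl; intro i _
            apply Finset.sum_congr rfl; intro i' _
            exact hinner i i'
        _ = (∑ i, star (x i) * Θ i) * (∑ i', star (Θ i') * x i') := by
            rw [Finset.sum_mul_sum]
            apply Finset.sum_congr rfl; intro i _
            apply Finset.sum_congr rfl; intro i' _
            ring
        _ = 0 := by rw [hx, mul_zero]
    have hnn : ∀ a b p, Complex.normSq (∑ i, star (x i) * W a b i p) = 0 := by
      apply sum3_zero
      · intro a b p; exact Complex.normSq_nonneg _
      · have hc2 : ((∑ a : Fin N, ∑ b : Fin N',
            ∑ p, Complex.normSq (∑ i, star (x i) * W a b i p) : ℝ) : ℂ) = 0 := by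
          push_cast
          rw [← htot]
          apply Finset.sum_congr rfl; intro a _
          apply Finset.sum_congr rfl; intro b _
          apply Finset.sum_congr rfl; intro p _
          rw [Complex.star_def, Complex.mul_conj]
        exact_mod_cast hc2
    intro a b p
    exact Complex.normSq_eq_zero.mp (hnn a b p)
  -- choose the proportionality constants
  have hcol : ∀ a b p, ∃ c : ℂ, ∀ i, W a b i p = c * Θ i := by
    intro a b
    exact col_span Θ hΘnorm (W a b) (fun x hx p => horth x hx a b p)
  choose cc hcc using hcol
  have hex : ∃ a b p, cc a b p ≠ 0 := by
    by_contra hno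
    push_neg at hno
    have hW0 : ∀ a b, W a b = 0 := by
      intro a b
      ext q p
      rw [hcc a b p q, hno a b p, zero_mul, Matrix.zero_apply]
    have hG0 : G = 0 := by
      calc G = 1 * G := (one_mul G).symm
        _ = (∑ a : Fin N, ∑ b : Fin N', (E a ⊗ₖ F b)ᴴ * (E a ⊗ₖ F b)) * G := by rw [hKK]
        _ = ∑ a : Fin N, ∑ b : Fin N', (E a ⊗ₖ F b)ᴴ * W a b := by
            rw [Finset.sum_mul]
            apply Finset.sum_congr rfl; intro a _
            rw [Finset.sum_mul]
            apply Finset.sum_congr rfl; intro b _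
            rw [Matrix.mul_assoc]
        _ = 0 := by
            simp only [hW0, Matrix.mul_zero, Finset.sum_const_zero]
    rw [hG0] at hρG
    simp only [Matrix.zero_mul] at hρG
    rw [hρG] at hρtr
    simp at hρtr
  obtain ⟨a₀, b₀, p₀, hc₀⟩ := hex
  -- reshaped matrices
  set Mm : (Fin (d ^ 2) × Fin (d ^ 2)) → Matrix (Fin (d ^ 2)) (Fin (d ^ 2)) ℂ :=
    fun p => Matrix.of (fun i j => G (i, j) p) with hMdef
  set T : Matrix (Fin (d ^ 2)) (Fin (d ^ 2)) ℂ := Matrix.of (fun i j => Θ (i, j)) with hTdef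
  have hEMF : ∀ a b p, E a * Mm p * (F b)ᵀ = cc a b p • T := by
    intro a b p
    ext i j
    have h1 := kron_mul_entry (E a) (F b) G i j p
    have h2 := hcc a b p (i, j)
    calc (E a * Mm p * (F b)ᵀ) i j = ((E a ⊗ₖ F b) * G) (i, j) p := by
          rw [h1]
      _ = cc a b p * Θ (i, j) := h2
      _ = (cc a b p • T) i j := by simp [hTdef]
  -- T is invertible
  set P : Matrix (Fin (d ^ 2)) (Fin (d ^ 2)) ℂ := Matrix.of α with hPdef
  set Q : Matrix (Fin (d ^ 2)) (Fin (d ^ 2)) ℂ := Matrix.of β with hQdef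
  set D : Matrix (Fin (d ^ 2)) (Fin (d ^ 2)) ℂ :=
    Matrix.diagonal (fun k => (Real.sqrt (lam k) : ℂ)) with hDdef
  have hPPH : P * Pᴴ = 1 := by
    ext k k'
    rw [Matrix.mul_apply, Matrix.one_apply]
    have h0 := congrArg star (hα k k')
    rw [star_sum] at h0
    simp only [star_mul', star_star] at h0
    calc ∑ i, P k i * Pᴴ i k' = ∑ i, α k i * star (α k' i) := by
          apply Finset.sum_congr rfl; intro i _
          simp [hPdef, Matrix.conjTranspose_apply]
      _ = if k = k' then 1 else 0 := by
          have hstar : star (if k = k' then (1 : ℂ) else 0) = if k = k' then 1 else 0 := by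
            split <;> simp
          rw [hstar] at h0
          exact h0
  have hQQH : Q * Qᴴ = 1 := by
    ext k k'
    rw [Matrix.mul_apply, Matrix.one_apply]
    have h0 := congrArg star (hβ k k')
    rw [star_sum] at h0
    simp only [star_mul', star_star] at h0
    calc ∑ j, Q k j * Qᴴ j k' = ∑ j, β k j * star (β k' j) := by
          apply Finset.sum_congr rfl; intro j _
          simp [hQdef, Matrix.conjTranspose_apply]
      _ = if k = k' then 1 else 0 := by
          have hstar : star (if k = k' then (1 : ℂ) else 0) = if k = k' then 1 else 0 := by
            split <;> simp
          rw [hstar] at h0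
          exact h0
  have hPunit : IsUnit P := ⟨⟨P, Pᴴ, hPPH, mul_eq_one_comm.mp hPPH⟩, rfl⟩
  have hQunit : IsUnit Q := ⟨⟨Q, Qᴴ, hQQH, mul_eq_one_comm.mp hQQH⟩, rfl⟩
  have hDunit : IsUnit D := by
    rw [Matrix.isUnit_iff_isUnit_det, hDdef, Matrix.det_diagonal, isUnit_iff_ne_zero]
    apply Finset.prod_ne_zero_iff.mpr
    intro k _
    simp only [ne_eq, Complex.ofReal_eq_zero]
    exact ne_of_gt (Real.sqrt_pos.mpr (hlam k))
  have hTeq : T = Pᵀ * D * Q := by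
    ext i j
    show Θ (i, j) = (Pᵀ * D * Q) i j
    rw [hΘ i j, Matrix.mul_apply]
    apply Finset.sum_congr rfl; intro k _
    rw [hDdef, Matrix.mul_diagonal]
    simp only [hPdef, hQdef, Matrix.transpose_apply, Matrix.of_apply]
    ring
  have hPtunit : IsUnit Pᵀ := by
    rw [Matrix.isUnit_iff_isUnit_det, Matrix.det_transpose, ← Matrix.isUnit_iff_isUnit_det]
    exact hPunit
  have hTunit : IsUnit T := by
    rw [hTeq]
    exact (hPtunit.mul hDunit).mul hQunit
  have hsmulunit : ∀ (c : ℂ) (X : Matrix (Fin (d ^ 2)) (Fin (d ^ 2)) ℂ),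
      c ≠ 0 → IsUnit X → IsUnit (c • X) := by
    intro c X hc hX
    rw [Matrix.isUnit_iff_isUnit_det, Matrix.det_smul]
    exact (isUnit_iff_ne_zero.mpr (pow_ne_zero _ hc)).mul ((Matrix.isUnit_iff_isUnit_det _).mp hX)
  -- units from the key relation at (a₀, b₀, p₀)
  have h₀ := hEMF a₀ b₀ p₀
  have hprod : IsUnit (E a₀ * Mm p₀ * (F b₀)ᵀ) := by
    rw [h₀]
    exact hsmulunit _ _ hc₀ hTunit
  have hdet := (Matrix.isUnit_iff_isUnit_det _).mp hprod
  rw [Matrix.det_mul, Matrix.det_mul] at hdet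
  have hEu : IsUnit (E a₀) := (Matrix.isUnit_iff_isUnit_det _).mpr
    (isUnit_of_mul_isUnit_left (isUnit_of_mul_isUnit_left hdet))
  have hMu : IsUnit (Mm p₀) := (Matrix.isUnit_iff_isUnit_det _).mpr
    (isUnit_of_mul_isUnit_right (isUnit_of_mul_isUnit_left hdet))
  have hFtu : IsUnit (F b₀)ᵀ := (Matrix.isUnit_iff_isUnit_det _).mpr
    (isUnit_of_mul_isUnit_right hdet)
  -- all columns of G are proportional
  have hMp : ∀ p, Mm p = (cc a₀ b₀ p / cc a₀ b₀ p₀) • Mm p₀ := by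
    intro p
    apply cancel_mid hEu hFtu
    rw [hEMF a₀ b₀ p]
    calc cc a₀ b₀ p • T = (cc a₀ b₀ p / cc a₀ b₀ p₀) • (cc a₀ b₀ p₀ • T) := by
          rw [smul_smul, div_mul_cancel₀ _ hc₀]
      _ = (cc a₀ b₀ p / cc a₀ b₀ p₀) • (E a₀ * Mm p₀ * (F b₀)ᵀ) := by rw [h₀]
      _ = E a₀ * ((cc a₀ b₀ p / cc a₀ b₀ p₀) • Mm p₀) * (F b₀)ᵀ := by
          rw [Matrix.mul_smul, Matrix.smul_mul]
  -- all Kraus operators are proportional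
  have hFb : ∀ b, F b = (cc a₀ b p₀ / cc a₀ b₀ p₀) • F b₀ := by
    intro b
    have h1 : E a₀ * Mm p₀ * (F b)ᵀ
        = E a₀ * Mm p₀ * ((cc a₀ b p₀ / cc a₀ b₀ p₀) • (F b₀)ᵀ) := by
      rw [hEMF a₀ b p₀]
      calc cc a₀ b p₀ • T = (cc a₀ b p₀ / cc a₀ b₀ p₀) • (cc a₀ b₀ p₀ • T) := by
            rw [smul_smul, div_mul_cancel₀ _ hc₀]
        _ = (cc a₀ b p₀ / cc a₀ b₀ p₀) • (E a₀ * Mm p₀ * (F b₀)ᵀ) := by rw [h₀]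
        _ = E a₀ * Mm p₀ * ((cc a₀ b p₀ / cc a₀ b₀ p₀) • (F b₀)ᵀ) := by
            rw [Matrix.mul_smul]
    have h2 : (F b)ᵀ = (cc a₀ b p₀ / cc a₀ b₀ p₀) • (F b₀)ᵀ :=
      (hEu.mul hMu).mul_left_cancel h1
    have h3 := congrArg Matrix.transpose h2
    simpa [Matrix.transpose_smul, Matrix.transpose_transpose] using h3
  have hEa : ∀ a, E a = (cc a b₀ p₀ / cc a₀ b₀ p₀) • E a₀ := by
    intro a
    have h1 : E a * (Mm p₀ * (F b₀)ᵀ)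
        = ((cc a b₀ p₀ / cc a₀ b₀ p₀) • E a₀) * (Mm p₀ * (F b₀)ᵀ) := by
      rw [← Matrix.mul_assoc, hEMF a b₀ p₀]
      calc cc a b₀ p₀ • T = (cc a b₀ p₀ / cc a₀ b₀ p₀) • (cc a₀ b₀ p₀ • T) := by
            rw [smul_smul, div_mul_cancel₀ _ hc₀]
        _ = (cc a b₀ p₀ / cc a₀ b₀ p₀) • (E a₀ * Mm p₀ * (F b₀)ᵀ) := by rw [h₀]
        _ = ((cc a b₀ p₀ / cc a₀ b₀ p₀) • E a₀) * (Mm p₀ * (F b₀)ᵀ) := by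
            rw [Matrix.smul_mul, Matrix.mul_assoc]
    exact (hMu.mul hFtu).mul_right_cancel h1
  -- the distinguished Kraus operators are multiples of unitaries
  set eta : Fin N → ℂ := fun a => cc a b₀ p₀ / cc a₀ b₀ p₀ with hetadef
  have heta0 : eta a₀ = 1 := div_self hc₀
  set er : ℝ := ∑ a, Complex.normSq (eta a) with herdef
  have her1 : (1 : ℝ) ≤ er := by
    have h1 := Finset.single_le_sum (f := fun a => Complex.normSq (eta a))
      (fun a _ => Complex.normSq_nonneg _) (Finset.mem_univ a₀)
    simpa [heta0] using h1
  have her0 : (0 : ℝ) < er := lt_of_lt_of_le one_pos her1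
  have herne : ((er : ℝ) : ℂ) ≠ 0 := Complex.ofReal_ne_zero.mpr (ne_of_gt her0)
  have hEone : ((er : ℝ) : ℂ) • ((E a₀)ᴴ * E a₀) = 1 := by
    rw [← hE]
    calc ((er : ℝ) : ℂ) • ((E a₀)ᴴ * E a₀)
        = ∑ a, (star (eta a) * eta a) • ((E a₀)ᴴ * E a₀) := by
          rw [← Finset.sum_smul]
          congr 1
          rw [herdef]
          push_cast
          apply Finset.sum_congr rfl; intro a _
          rw [Complex.star_def]
          exact Complex.normSq_eq_conj_mul_self
      _ = ∑ a, (E a)ᴴ * E a := by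
          apply Finset.sum_congr rfl; intro a _
          rw [hEa a]
          rw [Matrix.conjTranspose_smul, Matrix.smul_mul, Matrix.mul_smul, smul_smul]
  have hEE : (E a₀)ᴴ * E a₀ = (((er : ℝ) : ℂ))⁻¹ • 1 := by
    have h1 := congrArg (fun X : Matrix (Fin (d ^ 2)) (Fin (d ^ 2)) ℂ =>
      (((er : ℝ) : ℂ))⁻¹ • X) hEone
    simp only [smul_smul] at h1
    rw [inv_mul_cancel₀ herne, one_smul] at h1
    exact h1
  set nu : Fin N' → ℂ := fun b => cc a₀ b p₀ / cc a₀ b₀ p₀ with hnudef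
  have hnu0 : nu b₀ = 1 := div_self hc₀
  set fr : ℝ := ∑ b, Complex.normSq (nu b) with hfrdef
  have hfr1 : (1 : ℝ) ≤ fr := by
    have h1 := Finset.single_le_sum (f := fun b => Complex.normSq (nu b))
      (fun b _ => Complex.normSq_nonneg _) (Finset.mem_univ b₀)
    simpa [hnu0] using h1
  have hfr0 : (0 : ℝ) < fr := lt_of_lt_of_le one_pos hfr1
  have hfrne : ((fr : ℝ) : ℂ) ≠ 0 := Complex.ofReal_ne_zero.mpr (ne_of_gt hfr0)
  have hFone : ((fr : ℝ) : ℂ) • ((F b₀)ᴴ * F b₀) = 1 := by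
    rw [← hF]
    calc ((fr : ℝ) : ℂ) • ((F b₀)ᴴ * F b₀)
        = ∑ b, (star (nu b) * nu b) • ((F b₀)ᴴ * F b₀) := by
          rw [← Finset.sum_smul]
          congr 1
          rw [hfrdef]
          push_cast
          apply Finset.sum_congr rfl; intro b _
          rw [Complex.star_def]
          exact Complex.normSq_eq_conj_mul_self
      _ = ∑ b, (F b)ᴴ * F b := by
          apply Finset.sum_congr rfl; intro b _
          rw [hFb b]
          rw [Matrix.conjTranspose_smul, Matrix.smul_mul, Matrix.mul_smul, smul_smul]
  have hFF : (F b₀)ᴴ * F b₀ = (((fr : ℝ) : ℂ))⁻¹ • 1 := by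
    have h1 := congrArg (fun X : Matrix (Fin (d ^ 2)) (Fin (d ^ 2)) ℂ =>
      (((fr : ℝ) : ℂ))⁻¹ • X) hFone
    simp only [smul_smul] at h1
    rw [inv_mul_cancel₀ hfrne, one_smul] at h1
    exact h1
  set U : Matrix (Fin (d ^ 2)) (Fin (d ^ 2)) ℂ :=
    ((Real.sqrt er : ℝ) : ℂ) • E a₀ with hUdef
  set V : Matrix (Fin (d ^ 2)) (Fin (d ^ 2)) ℂ :=
    ((Real.sqrt fr : ℝ) : ℂ) • F b₀ with hVdef
  have hsqer : star ((Real.sqrt er : ℝ) : ℂ) * ((Real.sqrt er : ℝ) : ℂ) = ((er : ℝ) : ℂ) := by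
    rw [Complex.star_def, Complex.conj_ofReal, ← Complex.ofReal_mul,
      Real.mul_self_sqrt (le_of_lt her0)]
  have hsqfr : star ((Real.sqrt fr : ℝ) : ℂ) * ((Real.sqrt fr : ℝ) : ℂ) = ((fr : ℝ) : ℂ) := by
    rw [Complex.star_def, Complex.conj_ofReal, ← Complex.ofReal_mul,
      Real.mul_self_sqrt (le_of_lt hfr0)]
  have hUU : Uᴴ * U = 1 := by
    rw [hUdef, Matrix.conjTranspose_smul, Matrix.smul_mul, Matrix.mul_smul, smul_smul, hEE,
      smul_smul, hsqer, mul_inv_cancel₀ herne, one_smul]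
  have hVV : Vᴴ * V = 1 := by
    rw [hVdef, Matrix.conjTranspose_smul, Matrix.smul_mul, Matrix.mul_smul, smul_smul, hFF,
      smul_smul, hsqfr, mul_inv_cancel₀ hfrne, one_smul]
  have hUUc : U * Uᴴ = 1 := mul_eq_one_comm.mp hUU
  have hVVc : V * Vᴴ = 1 := mul_eq_one_comm.mp hVV
  -- the pure state vector
  set mu : (Fin (d ^ 2) × Fin (d ^ 2)) → ℂ := fun p => cc a₀ b₀ p / cc a₀ b₀ p₀ with hmudef
  have hmu0 : mu p₀ = 1 := div_self hc₀
  have hGcol : ∀ q p, G q p = mu p * G q p₀ := by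
    rintro ⟨i, j⟩ p
    have h1 := congrArg (fun X : Matrix (Fin (d ^ 2)) (Fin (d ^ 2)) ℂ => X i j) (hMp p)
    simpa [hMdef, Matrix.smul_apply] using h1
  set mr : ℝ := ∑ p, Complex.normSq (mu p) with hmrdef
  have hmr1 : (1 : ℝ) ≤ mr := by
    have h1 := Finset.single_le_sum (f := fun p => Complex.normSq (mu p))
      (fun p _ => Complex.normSq_nonneg _) (Finset.mem_univ p₀)
    simpa [hmu0] using h1
  have hmr0 : (0 : ℝ) < mr := lt_of_lt_of_le one_pos hmr1
  set w : ℝ := Real.sqrt mr with hwdef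
  set φ : (Fin (d ^ 2) × Fin (d ^ 2)) → ℂ := fun q => ((w : ℝ) : ℂ) * G q p₀ with hφdef
  have hsqw : ((w : ℝ) : ℂ) * ((w : ℝ) : ℂ) = ((mr : ℝ) : ℂ) := by
    rw [hwdef, ← Complex.ofReal_mul, Real.mul_self_sqrt hmr0.le]
  have hρφ : ρ = Matrix.of (fun q r => φ q * star (φ r)) := by
    rw [hρG]
    ext q r
    rw [Matrix.mul_apply]
    show ∑ p, G q p * Gᴴ p r = φ q * star (φ r)
    calc ∑ p, G q p * Gᴴ p r
        = ∑ p, (mu p * star (mu p)) * (G q p₀ * star (G r p₀)) := by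
          apply Finset.sum_congr rfl; intro p _
          rw [Matrix.conjTranspose_apply, hGcol q p, hGcol r p, star_mul']
          ring
      _ = ((mr : ℝ) : ℂ) * (G q p₀ * star (G r p₀)) := by
          rw [← Finset.sum_mul]
          congr 1
          rw [hmrdef]
          push_cast
          apply Finset.sum_congr rfl; intro p _
          rw [Complex.star_def, Complex.mul_conj]
      _ = φ q * star (φ r) := by
          rw [hφdef]
          show ((mr : ℝ) : ℂ) * (G q p₀ * star (G r p₀))
            = (((w : ℝ) : ℂ) * G q p₀) * star (((w : ℝ) : ℂ) * G r p₀)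
          rw [star_mul', Complex.star_def, Complex.conj_ofReal, ← hsqw]
          ring
  have hφnorm : ∑ x, Complex.normSq (φ x) = 1 := by
    have h1 : ρ.trace = ↑(∑ x, Complex.normSq (φ x)) := by
      rw [hρφ, Matrix.trace]
      push_cast
      apply Finset.sum_congr rfl; intro q _
      rw [Matrix.diag_apply, Matrix.of_apply, Complex.star_def, Complex.mul_conj]
    rw [hρtr] at h1
    exact_mod_cast h1.symm
  -- matrix of φ and the unitary conjugation relation
  have hMφ : Matrix.of (fun i j => φ (i, j)) = ((w : ℝ) : ℂ) • Mm p₀ := by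
    ext i j
    simp [hφdef, hMdef, Matrix.smul_apply]
  set γ : ℂ := ((Real.sqrt er : ℝ) : ℂ) * ((Real.sqrt fr : ℝ) : ℂ) * ((w : ℝ) : ℂ) * cc a₀ b₀ p₀
    with hγdef
  have hUMV : U * Matrix.of (fun i j => φ (i, j)) * Vᵀ = γ • T := by
    rw [hMφ, hUdef, hVdef, Matrix.transpose_smul]
    simp only [Matrix.smul_mul, Matrix.mul_smul, smul_smul]
    rw [h₀, smul_smul, hγdef]
    congr 1
    ring
  set Vc : Matrix (Fin (d ^ 2)) (Fin (d ^ 2)) ℂ := (Vᴴ)ᵀ with hVcdef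
  have hVtVc : Vᵀ * Vc = 1 := by
    rw [hVcdef, ← Matrix.transpose_mul, hVV, Matrix.transpose_one]
  have hVcVt : Vc * Vᵀ = 1 := by
    rw [hVcdef, ← Matrix.transpose_mul, hVVc, Matrix.transpose_one]
  have hVcH : Vcᴴ = Vᵀ := by
    rw [hVcdef]
    ext i j
    simp [Matrix.conjTranspose_apply, Matrix.transpose_apply]
  have hMφ2 : Matrix.of (fun i j => φ (i, j)) = γ • (Uᴴ * T * Vc) := by
    calc Matrix.of (fun i j => φ (i, j))
        = (Uᴴ * U) * Matrix.of (fun i j => φ (i, j)) * (Vᵀ * Vc) := by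
          rw [hUU, hVtVc, Matrix.one_mul, Matrix.mul_one]
      _ = Uᴴ * (U * Matrix.of (fun i j => φ (i, j)) * Vᵀ) * Vc := by
          simp only [Matrix.mul_assoc]
      _ = Uᴴ * (γ • T) * Vc := by rw [hUMV]
      _ = γ • (Uᴴ * T * Vc) := by rw [Matrix.mul_smul, Matrix.smul_mul]
  -- |γ| = 1 via Frobenius norms
  have hTnorm : ∑ j, ∑ i, Complex.normSq (T i j) = 1 := by
    have h1 : (↑(∑ j, ∑ i, Complex.normSq (T i j)) : ℂ) = 1 := by
      push_cast
      have h2 : ∀ i j : Fin (d ^ 2), (↑(Complex.normSq (T i j)) : ℂ)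
          = star (Θ (i, j)) * Θ (i, j) := by
        intro i j
        rw [Complex.star_def]
        exact Complex.normSq_eq_conj_mul_self
      calc ∑ j, ∑ i, (↑(Complex.normSq (T i j)) : ℂ)
          = ∑ j, ∑ i, star (Θ (i, j)) * Θ (i, j) := by
            apply Finset.sum_congr rfl; intro j _
            apply Finset.sum_congr rfl; intro i _
            exact h2 i j
        _ = ∑ i, ∑ j, star (Θ (i, j)) * Θ (i, j) := Finset.sum_comm
        _ = ∑ x, star (Θ x) * Θ x := (Fintype.sum_prod_type (fun x => star (Θ x) * Θ x)).symm
        _ = 1 := hΘnorm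
    exact_mod_cast h1
  have hAA : (Uᴴ * T * Vc)ᴴ * (Uᴴ * T * Vc) = Vᵀ * (Tᴴ * T) * Vc := by
    rw [Matrix.conjTranspose_mul, Matrix.conjTranspose_mul,
      Matrix.conjTranspose_conjTranspose, hVcH]
    calc Vᵀ * (Tᴴ * U) * (Uᴴ * T * Vc)
        = Vᵀ * Tᴴ * (U * Uᴴ) * T * Vc := by simp only [Matrix.mul_assoc]
      _ = Vᵀ * Tᴴ * T * Vc := by rw [hUUc, Matrix.mul_one]
      _ = Vᵀ * (Tᴴ * T) * Vc := by simp only [Matrix.mul_assoc]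
  have htraceA : Matrix.trace (Vᵀ * (Tᴴ * T) * Vc) = Matrix.trace (Tᴴ * T) := by
    rw [Matrix.trace_mul_cycle, hVcVt, Matrix.one_mul]
  have hTT : Matrix.trace (Tᴴ * T) = 1 := by
    rw [frob_trace]
    exact_mod_cast congrArg (fun r : ℝ => (r : ℂ)) hTnorm
  have hγ1 : star γ * γ = 1 := by
    have h1 : Matrix.trace ((Matrix.of fun i j => φ (i, j))ᴴ
        * (Matrix.of fun i j => φ (i, j))) = 1 := by
      rw [frob_trace]
      have h2 : ∑ j, ∑ i, Complex.normSq ((Matrix.of fun i j => φ (i, j)) i j) = 1 := by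
        calc ∑ j, ∑ i, Complex.normSq ((Matrix.of fun i j => φ (i, j)) i j)
            = ∑ i, ∑ j, Complex.normSq (φ (i, j)) := Finset.sum_comm
          _ = ∑ x, Complex.normSq (φ x) := (Fintype.sum_prod_type (fun x => Complex.normSq (φ x))).symm
          _ = 1 := hφnorm
      exact_mod_cast congrArg (fun r : ℝ => (r : ℂ)) h2
    rw [hMφ2, Matrix.conjTranspose_smul, Matrix.smul_mul, Matrix.mul_smul, smul_smul,
      Matrix.trace_smul, hAA, htraceA, hTT, smul_eq_mul, mul_one] at h1
    exact h1
  -- final orthonormal families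
  set A : Fin (d ^ 2) → Fin (d ^ 2) → ℂ := fun k i => γ * ∑ i', Uᴴ i i' * α k i' with hAdef
  set B : Fin (d ^ 2) → Fin (d ^ 2) → ℂ := fun k j => ∑ j', Vᴴ j j' * β k j' with hBdef
  have hUHU : (Uᴴ)ᴴ * Uᴴ = 1 := by rw [Matrix.conjTranspose_conjTranspose]; exact hUUc
  have hVHV : (Vᴴ)ᴴ * Vᴴ = 1 := by rw [Matrix.conjTranspose_conjTranspose]; exact hVVc
  have hAorth : OrthonormalFamily (d ^ 2) A := by
    rw [hAdef]
    exact orth_conj γ hγ1 Uᴴ hUHU α hα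
  have hBorth : OrthonormalFamily (d ^ 2) B := by
    have h1 := orth_conj 1 (by simp) Vᴴ hVHV β hβ
    rw [hBdef]
    intro k k'
    have h2 := h1 k k'
    simpa using h2
  -- the Schmidt decomposition of φ
  have hφAB : ∀ i j, φ (i, j) = ∑ k, ((Real.sqrt (lam k) : ℝ) : ℂ) * A k i * B k j := by
    intro i j
    have h1 : φ (i, j) = (Matrix.of fun i j => φ (i, j)) i j := rfl
    rw [h1, hMφ2, Matrix.smul_apply, smul_eq_mul]
    have hVcapp : ∀ j' : Fin (d ^ 2), Vc j' j = Vᴴ j j' := by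
      intro j'; rw [hVcdef]; rfl
    calc γ * (Uᴴ * T * Vc) i j
        = γ * ∑ j', ∑ i', (Uᴴ i i' * T i' j') * Vc j' j := by
          congr 1
          rw [Matrix.mul_apply]
          apply Finset.sum_congr rfl; intro j' _
          rw [Matrix.mul_apply, Finset.sum_mul]
      _ = γ * ∑ j', ∑ i', ∑ k, (((Real.sqrt (lam k) : ℝ) : ℂ) * α k i' * β k j')
            * (Uᴴ i i' * Vc j' j) := by
          congr 1
          apply Finset.sum_congr rfl; intro j' _
          apply Finset.sum_congr rfl; intro i' _
          have hT : T i' j' = ∑ k, ((Real.sqrt (lam k) : ℝ) : ℂ) * α k i' * β k j' := hΘ i' j'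
          rw [hT, Finset.mul_sum, Finset.sum_mul]
          apply Finset.sum_congr rfl; intro k _
          ring
      _ = γ * ∑ k, ∑ j', ∑ i', (((Real.sqrt (lam k) : ℝ) : ℂ) * α k i' * β k j')
            * (Uᴴ i i' * Vc j' j) := by
          congr 1
          exact sum_swap3 fun j' i' k => (((Real.sqrt (lam k) : ℝ) : ℂ) * α k i' * β k j')
            * (Uᴴ i i' * Vc j' j)
      _ = ∑ k, ((Real.sqrt (lam k) : ℝ) : ℂ) * A k i * B k j := by
          rw [Finset.mul_sum]
          apply Finset.sum_congr rfl; intro k _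
          rw [hAdef, hBdef]
          have hr : ((Real.sqrt (lam k) : ℝ) : ℂ) * (γ * ∑ i', Uᴴ i i' * α k i')
              * (∑ j', Vᴴ j j' * β k j')
              = γ * ∑ j', ∑ i', (((Real.sqrt (lam k) : ℝ) : ℂ) * α k i' * β k j')
                * (Uᴴ i i' * Vc j' j) := by
            calc ((Real.sqrt (lam k) : ℝ) : ℂ) * (γ * ∑ i', Uᴴ i i' * α k i')
                  * (∑ j', Vᴴ j j' * β k j')
                = γ * (((Real.sqrt (lam k) : ℝ) : ℂ)
                    * ((∑ i', Uᴴ i i' * α k i') * (∑ j', Vᴴ j j' * β k j'))) := by ring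
              _ = γ * (((Real.sqrt (lam k) : ℝ) : ℂ)
                    * (∑ i', ∑ j', (Uᴴ i i' * α k i') * (Vᴴ j j' * β k j'))) := by
                  rw [Finset.sum_mul_sum]
              _ = γ * ∑ i', ∑ j', ((Real.sqrt (lam k) : ℝ) : ℂ)
                    * ((Uᴴ i i' * α k i') * (Vᴴ j j' * β k j')) := by
                  rw [Finset.mul_sum]
                  congr 1
                  apply Finset.sum_congr rfl; intro i' _
                  rw [Finset.mul_sum]
              _ = γ * ∑ j', ∑ i', (((Real.sqrt (lam k) : ℝ) : ℂ) * α k i' * β k j')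
                    * (Uᴴ i i' * Vc j' j) := by
                  congr 1
                  rw [Finset.sum_comm]
                  apply Finset.sum_congr rfl; intro j' _
                  apply Finset.sum_congr rfl; intro i' _
                  rw [hVcapp j']
                  ring
          exact hr.symm
  exact ⟨φ, A, B, hAorth, hBorth, hφnorm, hρφ, hφAB⟩

end
end
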